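/- arXiv:1812.08323 — 4 statements merged into one kernel-verified Lean document; each statement's English description precedes it below -/
import Mathlib

section
/- Let a > 0, s ∈ (0,1), let u : ℝ² → ℝ be four times continuously differentiable, and let x ∈ ℝ². Then there exist C > 0 and δ ∈ (0, a] such that |u(x) − u(y) + ρ_a(|x−y|)·g_x(y)| ≤ C·|x−y|^4 whenever 0 < |y−x| ≤ δ. Consequently, the function y ↦ (u(x) − u(y) + ρ_a(|x−y|)·g_x(y))/|x−y|^{2+2s}, defined for y ≠ x, tends to 0 as y → x, and hence extends to a continuous function on all of ℝ² by assigning it the value 0 at y = x. -/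
open MeasureTheory Set Filter Topology Classical

/-- The window function `ρ_a`. -/
noncomputable def rho (a r : ℝ) : ℝ :=
  if r < a then
    1 - 35 * (r / a) ^ 4 + 84 * (r / a) ^ 5 - 70 * (r / a) ^ 6 + 20 * (r / a) ^ 7
  else 0

/-- Partial derivative of `f` in the `i`-th coordinate direction. -/
noncomputable def pd (i : Fin 2) (f : EuclideanSpace ℝ (Fin 2) → ℝ) :
    EuclideanSpace ℝ (Fin 2) → ℝ :=
  fun x => fderiv ℝ f x (EuclideanSpace.single i 1)

/-- The subtracted (truncated) Taylor polynomial `g_x(y)` of `u(y) − u(x)`,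
up to third order, with `v = y − x`. -/
noncomputable def gsub (u : EuclideanSpace ℝ (Fin 2) → ℝ)
    (x y : EuclideanSpace ℝ (Fin 2)) : ℝ :=
  let v1 := y 0 - x 0
  let v2 := y 1 - x 1
  pd 0 u x * v1 + pd 1 u x * v2
    + pd 0 (pd 0 u) x * v1 ^ 2 / 2 + pd 1 (pd 1 u) x * v2 ^ 2 / 2
    + pd 0 (pd 1 u) x * v1 * v2
    + pd 0 (pd 0 (pd 0 u)) x * v1 ^ 3 / 6
    + pd 1 (pd 0 (pd 0 u)) x * v1 ^ 2 * v2 / 2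
    + pd 1 (pd 1 (pd 0 u)) x * v1 * v2 ^ 2 / 2
    + pd 1 (pd 1 (pd 1 u)) x * v2 ^ 3 / 6

/-- The Laplacian `Δu(x) = u₁₁(x) + u₂₂(x)`. -/
noncomputable def lap (u : EuclideanSpace ℝ (Fin 2) → ℝ)
    (x : EuclideanSpace ℝ (Fin 2)) : ℝ :=
  pd 0 (pd 0 u) x + pd 1 (pd 1 u) x

/-! ### Auxiliary development -/

local notation "E2" => EuclideanSpace ℝ (Fin 2)

@[fun_prop] theorem aux_diff_coord (i : Fin 2) (z : E2) :
    DifferentiableAt ℝ (fun y : E2 => y i) z :=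
  (EuclideanSpace.proj (𝕜 := ℝ) i).differentiableAt

@[fun_prop] theorem aux_cont_coord (i : Fin 2) : Continuous (fun y : E2 => y i) :=
  (EuclideanSpace.proj (𝕜 := ℝ) i).continuous

theorem pd_add' {f g : E2 → ℝ} {z : E2} (hf : DifferentiableAt ℝ f z)
    (hg : DifferentiableAt ℝ g z) (i : Fin 2) :
    pd i (fun y => f y + g y) z = pd i f z + pd i g z := by
  simp [pd, fderiv_fun_add hf hg]

theorem pd_sub' {f g : E2 → ℝ} {z : E2} (hf : DifferentiableAt ℝ f z)
    (hg : DifferentiableAt ℝ g z) (i : Fin 2) :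
    pd i (fun y => f y - g y) z = pd i f z - pd i g z := by
  simp [pd, fderiv_fun_sub hf hg]

theorem pd_mul' {f g : E2 → ℝ} {z : E2} (hf : DifferentiableAt ℝ f z)
    (hg : DifferentiableAt ℝ g z) (i : Fin 2) :
    pd i (fun y => f y * g y) z = pd i f z * g z + f z * pd i g z := by
  simp [pd, fderiv_fun_mul hf hg]; ring

theorem pd_const' (c : ℝ) (z : E2) (i : Fin 2) : pd i (fun _ => c) z = 0 := by simp [pd]

theorem pd_const_mul' {f : E2 → ℝ} {z : E2} (hf : DifferentiableAt ℝ f z) (c : ℝ) (i : Fin 2) :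
    pd i (fun y => c * f y) z = c * pd i f z := by
  simp [pd, fderiv_const_mul hf]

theorem pd_sub_coord' (i j : Fin 2) (x z : E2) :
    pd i (fun y : E2 => y j - x j) z = if i = j then 1 else 0 := by
  have h : fderiv ℝ (fun y : E2 => y j - x j) z = EuclideanSpace.proj j := by
    rw [fderiv_sub_const]
    exact (EuclideanSpace.proj (𝕜 := ℝ) j).fderiv
  simp only [pd, h]
  show (EuclideanSpace.single i (1:ℝ)) j = _
  rw [EuclideanSpace.single_apply]
  rcases eq_or_ne i j with h | h <;> simp [h, eq_comm]

theorem coord_le_norm (w : E2) (i : Fin 2) : |w i| ≤ ‖w‖ := by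
  rw [EuclideanSpace.norm_eq, ← Real.sqrt_sq_eq_abs]
  apply Real.sqrt_le_sqrt
  have := Finset.single_le_sum (f := fun j => ‖w j‖ ^ 2)
    (fun j _ => by positivity) (Finset.mem_univ i)
  simpa [Real.norm_eq_abs, sq_abs] using this

theorem fderiv_eq_pd {f : E2 → ℝ} {z : E2} (hf : DifferentiableAt ℝ f z) (w : E2) :
    fderiv ℝ f z w = pd 0 f z * w 0 + pd 1 f z * w 1 := by
  have hw : w = w 0 • EuclideanSpace.single 0 (1:ℝ) + w 1 • EuclideanSpace.single 1 (1:ℝ) := by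
    ext j
    fin_cases j <;> simp [EuclideanSpace.single_apply]
  conv_lhs => rw [hw]
  rw [map_add, (fderiv ℝ f z).map_smul, (fderiv ℝ f z).map_smul]
  simp [pd, smul_eq_mul]
  ring

theorem norm_fderiv_le_pd {f : E2 → ℝ} {z : E2} (hf : DifferentiableAt ℝ f z) :
    ‖fderiv ℝ f z‖ ≤ |pd 0 f z| + |pd 1 f z| := by
  refine ContinuousLinearMap.opNorm_le_bound _ (by positivity) fun w => ?_
  rw [fderiv_eq_pd hf, Real.norm_eq_abs]
  calc |pd 0 f z * w 0 + pd 1 f z * w 1|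
      ≤ |pd 0 f z * w 0| + |pd 1 f z * w 1| := abs_add_le _ _
    _ = |pd 0 f z| * |w 0| + |pd 1 f z| * |w 1| := by rw [abs_mul, abs_mul]
    _ ≤ |pd 0 f z| * ‖w‖ + |pd 1 f z| * ‖w‖ := by
        gcongr
        · exact coord_le_norm w 0
        · exact coord_le_norm w 1
    _ = (|pd 0 f z| + |pd 1 f z|) * ‖w‖ := by ring

/-- Mean value descent step. -/
theorem descent {f f0 f1 : E2 → ℝ} {x : E2} {C r : ℝ} (hC : 0 ≤ C) (n : ℕ)
    (hd : ∀ z ∈ Metric.closedBall x r, DifferentiableAt ℝ f z)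
    (h0 : ∀ z, pd 0 f z = f0 z) (h1 : ∀ z, pd 1 f z = f1 z)
    (hfx : f x = 0)
    (hb0 : ∀ z ∈ Metric.closedBall x r, |f0 z| ≤ C * ‖z - x‖ ^ n)
    (hb1 : ∀ z ∈ Metric.closedBall x r, |f1 z| ≤ C * ‖z - x‖ ^ n) :
    ∀ y ∈ Metric.closedBall x r, |f y| ≤ (2 * C) * ‖y - x‖ ^ (n + 1) := by
  intro y hy
  have hyr : ‖y - x‖ ≤ r := by
    rw [← dist_eq_norm]; exact Metric.mem_closedBall.1 hy
  set s := Metric.closedBall x ‖y - x‖ with hs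
  have hsub : s ⊆ Metric.closedBall x r := Metric.closedBall_subset_closedBall hyr
  have hdiff : ∀ z ∈ s, DifferentiableAt ℝ f z := fun z hz => hd z (hsub hz)
  have bound : ∀ z ∈ s, ‖fderiv ℝ f z‖ ≤ 2 * C * ‖y - x‖ ^ n := by
    intro z hz
    have hzx : ‖z - x‖ ≤ ‖y - x‖ := by
      rw [← dist_eq_norm]; exact Metric.mem_closedBall.1 hz
    have h := norm_fderiv_le_pd (hdiff z hz)
    rw [h0 z, h1 z] at h
    have b0 := hb0 z (hsub hz)
    have b1 := hb1 z (hsub hz)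
    have hp : C * ‖z - x‖ ^ n ≤ C * ‖y - x‖ ^ n := by gcongr
    linarith
  have key := Convex.norm_image_sub_le_of_norm_fderiv_le hdiff bound
    (convex_closedBall _ _) (Metric.mem_closedBall_self (norm_nonneg _))
    (by rw [Metric.mem_closedBall, dist_eq_norm])
  rw [hfx, sub_zero, Real.norm_eq_abs] at key
  calc |f y| ≤ 2 * C * ‖y - x‖ ^ n * ‖y - x‖ := key
    _ = (2 * C) * ‖y - x‖ ^ (n + 1) := by rw [pow_succ]; ring

/-- A `C¹` function satisfies a Lipschitz-type bound on the closed unit ball. -/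
theorem c1_bound {F : E2 → ℝ} (hF : ContDiff ℝ 1 F) (x : E2) :
    ∃ K > 0, ∀ z ∈ Metric.closedBall x 1, |F z - F x| ≤ K * ‖z - x‖ := by
  have hcont : Continuous (fderiv ℝ F) := (hF.fderiv_right (m := 0) (by norm_num)).continuous
  obtain ⟨K0, hK0⟩ := (isCompact_closedBall x 1).exists_bound_of_continuousOn
    hcont.continuousOn
  refine ⟨max K0 1, lt_of_lt_of_le one_pos (le_max_right _ _), fun z hz => ?_⟩
  have hd : ∀ w ∈ Metric.closedBall x 1, DifferentiableAt ℝ F w := fun w _ =>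
    hF.differentiable (by norm_num) w
  have bound : ∀ w ∈ Metric.closedBall x 1, ‖fderiv ℝ F w‖ ≤ max K0 1 := fun w hw =>
    (hK0 w hw).trans (le_max_left _ _)
  have key := Convex.norm_image_sub_le_of_norm_fderiv_le hd bound
    (convex_closedBall _ _) (Metric.mem_closedBall_self zero_le_one) hz
  rwa [Real.norm_eq_abs, ← dist_eq_norm] at key

section MainEstimates

variable (u : EuclideanSpace ℝ (Fin 2) → ℝ) (x : EuclideanSpace ℝ (Fin 2))

/-- The cubic Taylor polynomial as an explicit polynomial function. -/
noncomputable def Pg : E2 → ℝ := fun z =>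
  pd 0 u x * (z 0 - x 0) + pd 1 u x * (z 1 - x 1)
  + (pd 0 (pd 0 u) x / 2) * ((z 0 - x 0) * (z 0 - x 0))
  + (pd 1 (pd 1 u) x / 2) * ((z 1 - x 1) * (z 1 - x 1))
  + pd 0 (pd 1 u) x * ((z 0 - x 0) * (z 1 - x 1))
  + (pd 0 (pd 0 (pd 0 u)) x / 6) * ((z 0 - x 0) * ((z 0 - x 0) * (z 0 - x 0)))
  + (pd 1 (pd 0 (pd 0 u)) x / 2) * ((z 0 - x 0) * ((z 0 - x 0) * (z 1 - x 1)))
  + (pd 1 (pd 1 (pd 0 u)) x / 2) * ((z 0 - x 0) * ((z 1 - x 1) * (z 1 - x 1)))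
  + (pd 1 (pd 1 (pd 1 u)) x / 6) * ((z 1 - x 1) * ((z 1 - x 1) * (z 1 - x 1)))

noncomputable def P10 : E2 → ℝ := fun z =>
  pd 0 u x + pd 0 (pd 0 u) x * (z 0 - x 0) + pd 0 (pd 1 u) x * (z 1 - x 1)
  + (pd 0 (pd 0 (pd 0 u)) x / 2) * ((z 0 - x 0) * (z 0 - x 0))
  + pd 1 (pd 0 (pd 0 u)) x * ((z 0 - x 0) * (z 1 - x 1))
  + (pd 1 (pd 1 (pd 0 u)) x / 2) * ((z 1 - x 1) * (z 1 - x 1))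

noncomputable def P11 : E2 → ℝ := fun z =>
  pd 1 u x + pd 0 (pd 1 u) x * (z 0 - x 0) + pd 1 (pd 1 u) x * (z 1 - x 1)
  + (pd 1 (pd 0 (pd 0 u)) x / 2) * ((z 0 - x 0) * (z 0 - x 0))
  + pd 1 (pd 1 (pd 0 u)) x * ((z 0 - x 0) * (z 1 - x 1))
  + (pd 1 (pd 1 (pd 1 u)) x / 2) * ((z 1 - x 1) * (z 1 - x 1))

noncomputable def P200 : E2 → ℝ := fun z =>
  pd 0 (pd 0 u) x + pd 0 (pd 0 (pd 0 u)) x * (z 0 - x 0)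
    + pd 1 (pd 0 (pd 0 u)) x * (z 1 - x 1)

noncomputable def P201 : E2 → ℝ := fun z =>
  pd 0 (pd 1 u) x + pd 1 (pd 0 (pd 0 u)) x * (z 0 - x 0)
    + pd 1 (pd 1 (pd 0 u)) x * (z 1 - x 1)

noncomputable def P211 : E2 → ℝ := fun z =>
  pd 1 (pd 1 u) x + pd 1 (pd 1 (pd 0 u)) x * (z 0 - x 0)
    + pd 1 (pd 1 (pd 1 u)) x * (z 1 - x 1)

theorem gsub_eq_Pg (y : E2) : gsub u x y = Pg u x y := by
  simp only [gsub, Pg]; ring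

@[fun_prop] theorem Pg_diff (z : E2) : DifferentiableAt ℝ (Pg u x) z := by
  unfold Pg; fun_prop

@[fun_prop] theorem P10_diff (z : E2) : DifferentiableAt ℝ (P10 u x) z := by
  unfold P10; fun_prop

@[fun_prop] theorem P11_diff (z : E2) : DifferentiableAt ℝ (P11 u x) z := by
  unfold P11; fun_prop

@[fun_prop] theorem P200_diff (z : E2) : DifferentiableAt ℝ (P200 u x) z := by
  unfold P200; fun_prop

@[fun_prop] theorem P201_diff (z : E2) : DifferentiableAt ℝ (P201 u x) z := by
  unfold P201; fun_prop

@[fun_prop] theorem P211_diff (z : E2) : DifferentiableAt ℝ (P211 u x) z := by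
  unfold P211; fun_prop

@[fun_prop] theorem Pg_cont : Continuous (Pg u x) := by
  unfold Pg; fun_prop

theorem pd0_Pg (z : E2) : pd 0 (Pg u x) z = P10 u x z := by
  unfold Pg
  simp (disch := fun_prop) only [pd_add', pd_mul', pd_const_mul', pd_sub_coord', pd_const']
  simp only [P10]
  norm_num
  ring

theorem pd1_Pg (z : E2) : pd 1 (Pg u x) z = P11 u x z := by
  unfold Pg
  simp (disch := fun_prop) only [pd_add', pd_mul', pd_const_mul', pd_sub_coord', pd_const']
  simp only [P11]
  norm_num
  ring

theorem pd0_P10 (z : E2) : pd 0 (P10 u x) z = P200 u x z := by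
  unfold P10
  simp (disch := fun_prop) only [pd_add', pd_mul', pd_const_mul', pd_sub_coord', pd_const']
  simp only [P200]
  norm_num
  ring

theorem pd1_P10 (z : E2) : pd 1 (P10 u x) z = P201 u x z := by
  unfold P10
  simp (disch := fun_prop) only [pd_add', pd_mul', pd_const_mul', pd_sub_coord', pd_const']
  simp only [P201]
  norm_num
  ring

theorem pd0_P11 (z : E2) : pd 0 (P11 u x) z = P201 u x z := by
  unfold P11
  simp (disch := fun_prop) only [pd_add', pd_mul', pd_const_mul', pd_sub_coord', pd_const']
  simp only [P201]
  norm_num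
  ring

theorem pd1_P11 (z : E2) : pd 1 (P11 u x) z = P211 u x z := by
  unfold P11
  simp (disch := fun_prop) only [pd_add', pd_mul', pd_const_mul', pd_sub_coord', pd_const']
  simp only [P211]
  norm_num
  ring

theorem pd0_P200 (z : E2) : pd 0 (P200 u x) z = pd 0 (pd 0 (pd 0 u)) x := by
  unfold P200
  simp (disch := fun_prop) only [pd_add', pd_mul', pd_const_mul', pd_sub_coord', pd_const']
  norm_num

theorem pd1_P200 (z : E2) : pd 1 (P200 u x) z = pd 1 (pd 0 (pd 0 u)) x := by
  unfold P200
  simp (disch := fun_prop) only [pd_add', pd_mul', pd_const_mul', pd_sub_coord', pd_const']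
  norm_num

theorem pd0_P201 (z : E2) : pd 0 (P201 u x) z = pd 1 (pd 0 (pd 0 u)) x := by
  unfold P201
  simp (disch := fun_prop) only [pd_add', pd_mul', pd_const_mul', pd_sub_coord', pd_const']
  norm_num

theorem pd1_P201 (z : E2) : pd 1 (P201 u x) z = pd 1 (pd 1 (pd 0 u)) x := by
  unfold P201
  simp (disch := fun_prop) only [pd_add', pd_mul', pd_const_mul', pd_sub_coord', pd_const']
  norm_num

theorem pd0_P211 (z : E2) : pd 0 (P211 u x) z = pd 1 (pd 1 (pd 0 u)) x := by
  unfold P211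
  simp (disch := fun_prop) only [pd_add', pd_mul', pd_const_mul', pd_sub_coord', pd_const']
  norm_num

theorem pd1_P211 (z : E2) : pd 1 (P211 u x) z = pd 1 (pd 1 (pd 1 u)) x := by
  unfold P211
  simp (disch := fun_prop) only [pd_add', pd_mul', pd_const_mul', pd_sub_coord', pd_const']
  norm_num

end MainEstimates

theorem pd_contDiff {f : EuclideanSpace ℝ (Fin 2) → ℝ} {n m : WithTop ℕ∞}
    (hf : ContDiff ℝ n f) (h : m + 1 ≤ n) (i : Fin 2) : ContDiff ℝ m (pd i f) :=
  (hf.fderiv_right h).clm_apply contDiff_const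

theorem pd_pd_eq_fderiv2 {f : E2 → ℝ} {x : E2} (hf : ContDiffAt ℝ 2 f x) (i j : Fin 2) :
    pd i (pd j f) x
      = fderiv ℝ (fderiv ℝ f) x (EuclideanSpace.single i 1) (EuclideanSpace.single j 1) := by
  have hd : DifferentiableAt ℝ (fderiv ℝ f) x :=
    (hf.fderiv_right (m := 1) (by norm_num)).differentiableAt (by norm_num)
  show fderiv ℝ (fun z => fderiv ℝ f z (EuclideanSpace.single j 1)) x _ = _
  rw [fderiv_clm_apply hd (differentiableAt_const _)]
  simp

theorem pd_comm_at {f : E2 → ℝ} {x : E2} (hf : ContDiffAt ℝ 2 f x) (i j : Fin 2) :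
    pd i (pd j f) x = pd j (pd i f) x := by
  rw [pd_pd_eq_fderiv2 hf i j, pd_pd_eq_fderiv2 hf j i]
  exact (hf.isSymmSndFDerivAt (by simp [minSmoothness_of_isRCLikeNormedField])) _ _

theorem taylor_remainder (u : EuclideanSpace ℝ (Fin 2) → ℝ)
    (x : EuclideanSpace ℝ (Fin 2)) (hu : ContDiff ℝ 4 u) :
    ∃ C > (0:ℝ), ∀ y ∈ Metric.closedBall x 1,
      |u y - u x - Pg u x y| ≤ C * ‖y - x‖ ^ 4 := by
  have h3 : ∀ i, ContDiff ℝ 3 (pd i u) := fun i => pd_contDiff hu (by norm_num) i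
  have h2 : ∀ i j, ContDiff ℝ 2 (pd j (pd i u)) := fun i j =>
    pd_contDiff (h3 i) (by norm_num) j
  have h1 : ∀ i j k, ContDiff ℝ 1 (pd k (pd j (pd i u))) := fun i j k =>
    pd_contDiff (h2 i j) (by norm_num) k
  -- symmetry facts
  have sym_u : pd 0 (pd 1 u) = pd 1 (pd 0 u) := by
    funext z
    exact pd_comm_at ((hu.of_le (by norm_num)).contDiffAt) 0 1
  have symA : pd 0 (pd 1 (pd 0 u)) x = pd 1 (pd 0 (pd 0 u)) x :=
    pd_comm_at ((h3 0).contDiffAt.of_le (by norm_num)) 0 1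
  have symB : pd 0 (pd 1 (pd 1 u)) x = pd 1 (pd 0 (pd 1 u)) x :=
    pd_comm_at ((h3 1).contDiffAt.of_le (by norm_num)) 0 1
  -- Lipschitz bounds for the eight third derivatives
  obtain ⟨K1, K1pos, hK1⟩ := c1_bound (h1 0 0 0) x
  obtain ⟨K2, K2pos, hK2⟩ := c1_bound (h1 0 0 1) x
  obtain ⟨K3, K3pos, hK3⟩ := c1_bound (h1 0 1 0) x
  obtain ⟨K4, K4pos, hK4⟩ := c1_bound (h1 0 1 1) x
  obtain ⟨K5, K5pos, hK5⟩ := c1_bound (h1 1 0 0) x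
  obtain ⟨K6, K6pos, hK6⟩ := c1_bound (h1 1 0 1) x
  obtain ⟨K7, K7pos, hK7⟩ := c1_bound (h1 1 1 0) x
  obtain ⟨K8, K8pos, hK8⟩ := c1_bound (h1 1 1 1) x
  set CK := K1 + K2 + K3 + K4 + K5 + K6 + K7 + K8 with hCKdef
  have hCK : 0 < CK := by positivity
  have bump : ∀ {K : ℝ}, K ≤ CK → ∀ {v r : ℝ}, 0 ≤ r → |v| ≤ K * r → |v| ≤ CK * r ^ 1 := by
    intro K hKle v r hr h
    rw [pow_one]
    nlinarith
  -- second-level descents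
  have bD00 := descent (x := x) (C := CK) (r := 1) hCK.le 1
    (f := fun z => pd 0 (pd 0 u) z - P200 u x z)
    (f0 := fun z => pd 0 (pd 0 (pd 0 u)) z - pd 0 (pd 0 (pd 0 u)) x)
    (f1 := fun z => pd 1 (pd 0 (pd 0 u)) z - pd 1 (pd 0 (pd 0 u)) x)
    (fun z _ => ((h2 0 0).differentiable (by norm_num) z).sub (P200_diff u x z))
    (fun z => by
      rw [pd_sub' ((h2 0 0).differentiable (by norm_num) z) (P200_diff u x z), pd0_P200])
    (fun z => by
      rw [pd_sub' ((h2 0 0).differentiable (by norm_num) z) (P200_diff u x z), pd1_P200])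
    (by simp [P200])
    (fun z hz => bump (by linarith) (norm_nonneg _) (hK1 z hz))
    (fun z hz => bump (by linarith) (norm_nonneg _) (hK2 z hz))
  have bD01 := descent (x := x) (C := CK) (r := 1) hCK.le 1
    (f := fun z => pd 1 (pd 0 u) z - P201 u x z)
    (f0 := fun z => pd 0 (pd 1 (pd 0 u)) z - pd 1 (pd 0 (pd 0 u)) x)
    (f1 := fun z => pd 1 (pd 1 (pd 0 u)) z - pd 1 (pd 1 (pd 0 u)) x)
    (fun z _ => ((h2 0 1).differentiable (by norm_num) z).sub (P201_diff u x z))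
    (fun z => by
      rw [pd_sub' ((h2 0 1).differentiable (by norm_num) z) (P201_diff u x z), pd0_P201])
    (fun z => by
      rw [pd_sub' ((h2 0 1).differentiable (by norm_num) z) (P201_diff u x z), pd1_P201])
    (by simp [P201, ← sym_u])
    (fun z hz => by
      rw [← symA]
      exact bump (by linarith) (norm_nonneg _) (hK3 z hz))
    (fun z hz => bump (by linarith) (norm_nonneg _) (hK4 z hz))
  have bD10 := descent (x := x) (C := CK) (r := 1) hCK.le 1
    (f := fun z => pd 0 (pd 1 u) z - P201 u x z)
    (f0 := fun z => pd 0 (pd 0 (pd 1 u)) z - pd 1 (pd 0 (pd 0 u)) x)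
    (f1 := fun z => pd 1 (pd 0 (pd 1 u)) z - pd 1 (pd 1 (pd 0 u)) x)
    (fun z _ => ((h2 1 0).differentiable (by norm_num) z).sub (P201_diff u x z))
    (fun z => by
      rw [pd_sub' ((h2 1 0).differentiable (by norm_num) z) (P201_diff u x z), pd0_P201])
    (fun z => by
      rw [pd_sub' ((h2 1 0).differentiable (by norm_num) z) (P201_diff u x z), pd1_P201])
    (by simp [P201, sym_u])
    (fun z hz => by
      have hx0 : pd 0 (pd 0 (pd 1 u)) x = pd 1 (pd 0 (pd 0 u)) x := by
        rw [sym_u]; exact symA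
      rw [← hx0]
      exact bump (by linarith) (norm_nonneg _) (hK5 z hz))
    (fun z hz => by
      have hx1 : pd 1 (pd 0 (pd 1 u)) x = pd 1 (pd 1 (pd 0 u)) x := by rw [sym_u]
      rw [← hx1]
      exact bump (by linarith) (norm_nonneg _) (hK6 z hz))
  have bD11 := descent (x := x) (C := CK) (r := 1) hCK.le 1
    (f := fun z => pd 1 (pd 1 u) z - P211 u x z)
    (f0 := fun z => pd 0 (pd 1 (pd 1 u)) z - pd 1 (pd 1 (pd 0 u)) x)
    (f1 := fun z => pd 1 (pd 1 (pd 1 u)) z - pd 1 (pd 1 (pd 1 u)) x)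
    (fun z _ => ((h2 1 1).differentiable (by norm_num) z).sub (P211_diff u x z))
    (fun z => by
      rw [pd_sub' ((h2 1 1).differentiable (by norm_num) z) (P211_diff u x z), pd0_P211])
    (fun z => by
      rw [pd_sub' ((h2 1 1).differentiable (by norm_num) z) (P211_diff u x z), pd1_P211])
    (by simp [P211])
    (fun z hz => by
      have hx0 : pd 0 (pd 1 (pd 1 u)) x = pd 1 (pd 1 (pd 0 u)) x := by
        rw [symB, sym_u]
      rw [← hx0]
      exact bump (by linarith) (norm_nonneg _) (hK7 z hz))
    (fun z hz => bump (by linarith) (norm_nonneg _) (hK8 z hz))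
  -- first-level descents
  have bL10 := descent (x := x) (C := 2 * CK) (r := 1) (by positivity) 2
    (f := fun z => pd 0 u z - P10 u x z)
    (f0 := fun z => pd 0 (pd 0 u) z - P200 u x z)
    (f1 := fun z => pd 1 (pd 0 u) z - P201 u x z)
    (fun z _ => ((h3 0).differentiable (by norm_num) z).sub (P10_diff u x z))
    (fun z => by
      rw [pd_sub' ((h3 0).differentiable (by norm_num) z) (P10_diff u x z), pd0_P10])
    (fun z => by
      rw [pd_sub' ((h3 0).differentiable (by norm_num) z) (P10_diff u x z), pd1_P10])
    (by simp [P10])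
    bD00 bD01
  have bL11 := descent (x := x) (C := 2 * CK) (r := 1) (by positivity) 2
    (f := fun z => pd 1 u z - P11 u x z)
    (f0 := fun z => pd 0 (pd 1 u) z - P201 u x z)
    (f1 := fun z => pd 1 (pd 1 u) z - P211 u x z)
    (fun z _ => ((h3 1).differentiable (by norm_num) z).sub (P11_diff u x z))
    (fun z => by
      rw [pd_sub' ((h3 1).differentiable (by norm_num) z) (P11_diff u x z), pd0_P11])
    (fun z => by
      rw [pd_sub' ((h3 1).differentiable (by norm_num) z) (P11_diff u x z), pd1_P11])
    (by simp [P11])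
    bD10 bD11
  -- normalize the constants
  have bL10' : ∀ z ∈ Metric.closedBall x 1,
      |pd 0 u z - P10 u x z| ≤ 4 * CK * ‖z - x‖ ^ 3 := by
    intro z hz
    have := bL10 z hz
    have e : 2 * (2 * CK) = 4 * CK := by ring
    rwa [e] at this
  have bL11' : ∀ z ∈ Metric.closedBall x 1,
      |pd 1 u z - P11 u x z| ≤ 4 * CK * ‖z - x‖ ^ 3 := by
    intro z hz
    have := bL11 z hz
    have e : 2 * (2 * CK) = 4 * CK := by ring
    rwa [e] at this
  -- zero-level descent
  have hudiff : ∀ z : E2, DifferentiableAt ℝ u z := fun z =>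
    hu.differentiable (by norm_num) z
  have bL0 := descent (x := x) (C := 4 * CK) (r := 1) (by positivity) 3
    (f := fun z => u z - u x - Pg u x z)
    (f0 := fun z => pd 0 u z - P10 u x z)
    (f1 := fun z => pd 1 u z - P11 u x z)
    (fun z _ => ((hudiff z).sub_const _).sub (Pg_diff u x z))
    (fun z => by
      rw [pd_sub' ((hudiff z).sub_const _) (Pg_diff u x z), pd0_Pg]
      congr 1
      have : (fun y : E2 => u y - u x) = fun y : E2 => u y - (fun _ : E2 => u x) y := rfl
      rw [this, pd_sub' (hudiff z) (differentiableAt_const _), pd_const']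
      ring)
    (fun z => by
      rw [pd_sub' ((hudiff z).sub_const _) (Pg_diff u x z), pd1_Pg]
      congr 1
      have : (fun y : E2 => u y - u x) = fun y : E2 => u y - (fun _ : E2 => u x) y := rfl
      rw [this, pd_sub' (hudiff z) (differentiableAt_const _), pd_const']
      ring)
    (by simp [Pg])
    bL10' bL11'
  refine ⟨8 * CK, by positivity, fun y hy => ?_⟩
  have := bL0 y hy
  have e : 2 * (4 * CK) = 8 * CK := by ring
  rwa [e] at this

theorem rho_cont {a : ℝ} (ha : 0 < a) : Continuous (rho a) := by
  have hfun : rho a = fun r => if r ≤ a then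
      1 - 35 * (r / a) ^ 4 + 84 * (r / a) ^ 5 - 70 * (r / a) ^ 6 + 20 * (r / a) ^ 7 else 0 := by
    funext r
    rcases lt_trichotomy r a with h | h | h
    · rw [rho, if_pos h, if_pos h.le]
    · subst h
      rw [rho, if_neg (lt_irrefl _), if_pos le_rfl, div_self ha.ne']
      norm_num
    · rw [rho, if_neg (not_lt.2 h.le), if_neg (not_le.2 h)]
  rw [hfun]
  apply Continuous.if_le (by fun_prop) continuous_const continuous_id continuous_const
  intro r hr
  have hr' : r = a := hr
  rw [hr', div_self ha.ne']
  norm_num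

theorem rho_near_one {a : ℝ} (ha : 0 < a) {r : ℝ} (h0 : 0 ≤ r) (hra : r ≤ a) :
    |rho a r - 1| ≤ 209 * r ^ 4 / a ^ 4 := by
  have h4 : 209 * r ^ 4 / a ^ 4 = 209 * (r / a) ^ 4 := by
    rw [div_pow]; ring
  by_cases h : r < a
  · rw [rho, if_pos h, h4]
    set t := r / a with ht
    have ht0 : 0 ≤ t := by positivity
    have ht1 : t ≤ 1 := by rw [ht, div_le_one ha]; exact hra
    have h54 : t ^ 5 ≤ t ^ 4 := pow_le_pow_of_le_one ht0 ht1 (by norm_num)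
    have h64 : t ^ 6 ≤ t ^ 4 := pow_le_pow_of_le_one ht0 ht1 (by norm_num)
    have h74 : t ^ 7 ≤ t ^ 4 := pow_le_pow_of_le_one ht0 ht1 (by norm_num)
    have h50 : 0 ≤ t ^ 5 := by positivity
    have h60 : 0 ≤ t ^ 6 := by positivity
    have h70 : 0 ≤ t ^ 7 := by positivity
    have h40 : 0 ≤ t ^ 4 := by positivity
    rw [abs_le]
    constructor <;> nlinarith
  · have hr : r = a := le_antisymm hra (not_lt.1 h)
    rw [rho, if_neg h, hr]
    have : 209 * a ^ 4 / a ^ 4 = 209 := by field_simp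
    rw [this]
    rw [abs_of_nonpos (by norm_num)]
    norm_num

theorem singularity_subtraction_fourth_order (a s : ℝ) (ha : 0 < a)
    (hs : s ∈ Set.Ioo (0 : ℝ) 1)
    (u : EuclideanSpace ℝ (Fin 2) → ℝ) (hu : ContDiff ℝ 4 u)
    (x : EuclideanSpace ℝ (Fin 2)) :
    (∃ C > (0 : ℝ), ∃ δ ∈ Set.Ioc (0 : ℝ) a, ∀ y : EuclideanSpace ℝ (Fin 2),
        0 < ‖y - x‖ → ‖y - x‖ ≤ δ →
        |u x - u y + rho a ‖x - y‖ * gsub u x y| ≤ C * ‖x - y‖ ^ 4) ∧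
    Tendsto
      (fun y : EuclideanSpace ℝ (Fin 2) =>
        (u x - u y + rho a ‖x - y‖ * gsub u x y) / ‖x - y‖ ^ (2 + 2 * s))
      (𝓝[≠] x) (𝓝 0) ∧
    Continuous (fun y : EuclideanSpace ℝ (Fin 2) =>
      if y = x then 0
      else (u x - u y + rho a ‖x - y‖ * gsub u x y) / ‖x - y‖ ^ (2 + 2 * s)) := by
  obtain ⟨C0, hC0, hC0b⟩ := taylor_remainder u x hu
  obtain ⟨MG, hMG⟩ := (isCompact_closedBall x 1).exists_bound_of_continuousOn
    (Pg_cont u x).continuousOn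
  have hMG0 : 0 ≤ MG :=
    le_trans (norm_nonneg _) (hMG x (Metric.mem_closedBall_self zero_le_one))
  set δ := min 1 a with hδdef
  have hδpos : 0 < δ := lt_min one_pos ha
  have hδa : δ ≤ a := min_le_right 1 a
  set C := C0 + 209 * MG / a ^ 4 + 1 with hCdef
  have hC2 : 0 ≤ 209 * MG / a ^ 4 :=
    div_nonneg (by linarith) (by positivity)
  have hCpos : 0 < C := by
    rw [hCdef]; linarith
  -- the key pointwise bound
  have key : ∀ y : EuclideanSpace ℝ (Fin 2), ‖y - x‖ ≤ δ →
      |u x - u y + rho a ‖x - y‖ * gsub u x y| ≤ C * ‖x - y‖ ^ 4 := by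
    intro y hyδ
    have hy1 : y ∈ Metric.closedBall x 1 := by
      rw [Metric.mem_closedBall, dist_eq_norm]
      exact hyδ.trans (min_le_left 1 a)
    have hr : ‖x - y‖ = ‖y - x‖ := norm_sub_rev x y
    have hT := hC0b y hy1
    have hρ : |rho a ‖x - y‖ - 1| ≤ 209 * ‖x - y‖ ^ 4 / a ^ 4 :=
      rho_near_one ha (norm_nonneg _) (by rw [hr]; exact hyδ.trans hδa)
    have hG : |Pg u x y| ≤ MG := by
      have := hMG y hy1
      rwa [Real.norm_eq_abs] at this
    have heq : u x - u y + rho a ‖x - y‖ * gsub u x y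
        = -(u y - u x - Pg u x y) + (rho a ‖x - y‖ - 1) * Pg u x y := by
      rw [gsub_eq_Pg]; ring
    rw [heq]
    have habs : |(-(u y - u x - Pg u x y)) + (rho a ‖x - y‖ - 1) * Pg u x y|
        ≤ |u y - u x - Pg u x y| + |rho a ‖x - y‖ - 1| * |Pg u x y| := by
      calc |(-(u y - u x - Pg u x y)) + (rho a ‖x - y‖ - 1) * Pg u x y|
          ≤ |(-(u y - u x - Pg u x y))| + |(rho a ‖x - y‖ - 1) * Pg u x y| := abs_add_le _ _
        _ = |u y - u x - Pg u x y| + |rho a ‖x - y‖ - 1| * |Pg u x y| := by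
            rw [abs_neg, abs_mul]
    have hmul : |rho a ‖x - y‖ - 1| * |Pg u x y|
        ≤ (209 * ‖x - y‖ ^ 4 / a ^ 4) * MG :=
      mul_le_mul hρ hG (abs_nonneg _) (by positivity)
    have hpow : ‖x - y‖ ^ 4 = ‖y - x‖ ^ 4 := by rw [hr]
    calc |(-(u y - u x - Pg u x y)) + (rho a ‖x - y‖ - 1) * Pg u x y|
        ≤ |u y - u x - Pg u x y| + |rho a ‖x - y‖ - 1| * |Pg u x y| := habs
      _ ≤ C0 * ‖y - x‖ ^ 4 + (209 * ‖x - y‖ ^ 4 / a ^ 4) * MG := by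
          have := hT; linarith
      _ = (C0 + 209 * MG / a ^ 4) * ‖x - y‖ ^ 4 := by
          rw [hpow]; ring
      _ ≤ C * ‖x - y‖ ^ 4 := by
          have h40 : (0:ℝ) ≤ ‖x - y‖ ^ 4 := by positivity
          nlinarith
  -- part 2: the limit
  have h2s : 0 < 2 - 2 * s := by
    obtain ⟨hs0, hs1⟩ := hs; linarith
  have htend : Tendsto
      (fun y : EuclideanSpace ℝ (Fin 2) =>
        (u x - u y + rho a ‖x - y‖ * gsub u x y) / ‖x - y‖ ^ (2 + 2 * s))
      (𝓝[≠] x) (𝓝 0) := by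
    apply squeeze_zero_norm'
      (a := fun y : EuclideanSpace ℝ (Fin 2) => C * ‖x - y‖ ^ (2 - 2 * s))
    · have hball : Metric.ball x δ ∈ 𝓝 x := Metric.ball_mem_nhds x hδpos
      filter_upwards [self_mem_nhdsWithin, mem_nhdsWithin_of_mem_nhds hball] with y hy hyb
      have hyx : y ≠ x := hy
      have hxy0 : x - y ≠ 0 := sub_ne_zero.mpr (Ne.symm hyx)
      have hrpos : 0 < ‖x - y‖ := norm_pos_iff.mpr hxy0
      have hyδ : ‖y - x‖ ≤ δ := by
        rw [← dist_eq_norm]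
        exact le_of_lt (Metric.mem_ball.1 hyb)
      have hk := key y hyδ
      have hdpos : 0 < ‖x - y‖ ^ (2 + 2 * s) := Real.rpow_pos_of_pos hrpos _
      rw [Real.norm_eq_abs, abs_div, abs_of_nonneg hdpos.le]
      rw [div_le_iff₀ hdpos]
      have hrw : C * ‖x - y‖ ^ (2 - 2 * s) * ‖x - y‖ ^ (2 + 2 * s)
          = C * ‖x - y‖ ^ 4 := by
        rw [mul_assoc, ← Real.rpow_add hrpos,
          show (2:ℝ) - 2*s + (2 + 2*s) = ((4:ℕ):ℝ) by push_cast; ring,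
          Real.rpow_natCast]
      rw [hrw]
      exact hk
    · have hnorm : Tendsto (fun y : EuclideanSpace ℝ (Fin 2) => ‖x - y‖) (𝓝[≠] x) (𝓝 0) := by
        apply tendsto_nhdsWithin_of_tendsto_nhds
        have : Continuous (fun y : EuclideanSpace ℝ (Fin 2) => ‖x - y‖) := by fun_prop
        have h0 := this.tendsto x
        simpa using h0
      have := (hnorm.rpow_const (p := 2 - 2*s) (Or.inr h2s.le)).const_mul C
      rw [Real.zero_rpow h2s.ne', mul_zero] at this
      exact this
  refine ⟨⟨C, hCpos, δ, ⟨hδpos, hδa⟩, fun y _ h2 => key y h2⟩, htend, ?_⟩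
  -- part 3: continuity of the extension
  have hgsubc : Continuous (fun y => gsub u x y) := by
    have : (fun y => gsub u x y) = Pg u x := funext (gsub_eq_Pg u x)
    rw [this]; exact Pg_cont u x
  have hnum : Continuous (fun y : EuclideanSpace ℝ (Fin 2) =>
      u x - u y + rho a ‖x - y‖ * gsub u x y) := by
    apply (continuous_const.sub hu.continuous).add
    apply Continuous.mul _ hgsubc
    exact (rho_cont ha).comp (by fun_prop)
  rw [continuous_iff_continuousAt]
  intro y₀
  by_cases hy₀ : y₀ = x
  · subst hy₀
    have htot : Tendsto (fun y : EuclideanSpace ℝ (Fin 2) =>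
        if y = y₀ then (0:ℝ)
        else (u y₀ - u y + rho a ‖y₀ - y‖ * gsub u y₀ y) / ‖y₀ - y‖ ^ (2 + 2 * s))
        (𝓝 y₀) (𝓝 0) := by
      rw [← nhdsNE_sup_pure y₀, tendsto_sup]
      constructor
      · apply Tendsto.congr' _ htend
        filter_upwards [self_mem_nhdsWithin] with y hy
        exact (if_neg hy).symm
      · have h0 : (fun y : EuclideanSpace ℝ (Fin 2) =>
            if y = y₀ then (0:ℝ)
            else (u y₀ - u y + rho a ‖y₀ - y‖ * gsub u y₀ y) / ‖y₀ - y‖ ^ (2 + 2 * s)) y₀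
            = 0 := by simp
        have := tendsto_pure_nhds (fun y : EuclideanSpace ℝ (Fin 2) =>
            if y = y₀ then (0:ℝ)
            else (u y₀ - u y + rho a ‖y₀ - y‖ * gsub u y₀ y) / ‖y₀ - y‖ ^ (2 + 2 * s)) y₀
        simpa using this
    unfold ContinuousAt
    convert htot using 2
    simp
  · have hne : x - y₀ ≠ 0 := sub_ne_zero.mpr (fun h => hy₀ (Eq.symm h))
    have hrpos : 0 < ‖x - y₀‖ := norm_pos_iff.mpr hne
    have hdenc : ContinuousAt (fun y : EuclideanSpace ℝ (Fin 2) =>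
        ‖x - y‖ ^ (2 + 2 * s)) y₀ := by
      apply ContinuousAt.rpow_const
      · exact (by fun_prop : Continuous (fun y : EuclideanSpace ℝ (Fin 2) => ‖x - y‖)).continuousAt
      · exact Or.inl hrpos.ne'
    have hexprc : ContinuousAt (fun y : EuclideanSpace ℝ (Fin 2) =>
        (u x - u y + rho a ‖x - y‖ * gsub u x y) / ‖x - y‖ ^ (2 + 2 * s)) y₀ :=
      hnum.continuousAt.div hdenc (Real.rpow_pos_of_pos hrpos _).ne'
    apply hexprc.congr
    filter_upwards [isOpen_compl_singleton.mem_nhds (by simpa using hy₀ : y₀ ∈ ({x}ᶜ : Set _))]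
      with y hy
    exact (if_neg hy).symm
end

section
/- Let p ≥ 0 be an integer and u₁ ≤ u₂ ≤ … ≤ u_{l+1} a nondecreasing knot vector with l ≥ p + 1, and let B_{i,p} (1 ≤ i ≤ l − p) be the B-spline basis functions. Then for every u ∈ [u_{p+1}, u_{l−p+1}), Σ_{i=1}^{l−p} B_{i,p}(u) = 1 (partition of unity). -/
open MeasureTheory Set Filter Topology Classical

/-- The Cox–de Boor B-spline basis functions `B_{i,p}` for the knot vector `U`
(indexed from 1), with the convention that any term with zero denominator is 0. -/
noncomputable def bspline (U : ℕ → ℝ) : ℕ → ℕ → ℝ → ℝ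
  | 0, i, t => if U i ≤ t ∧ t < U (i + 1) then 1 else 0
  | p + 1, i, t =>
      (if U (i + p + 1) = U i then 0
        else (t - U i) / (U (i + p + 1) - U i) * bspline U p i t) +
      (if U (i + p + 2) = U (i + 1) then 0
        else (U (i + p + 2) - t) / (U (i + p + 2) - U (i + 1)) * bspline U p (i + 1) t)

lemma bspline_zero_left (U : ℕ → ℝ) (p : ℕ) :
    ∀ i (t : ℝ), (∀ k, i ≤ k → k ≤ i + p → t < U k) → bspline U p i t = 0 := by
  induction p with
  | zero =>
    intro i t h
    have := h i le_rfl le_rfl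
    simp only [bspline, ite_eq_right_iff]
    rintro ⟨h1, _⟩; linarith
  | succ p ih =>
    intro i t h
    rw [bspline, ih i t (fun k hk hk' => h k hk (by omega)),
      ih (i+1) t (fun k hk hk' => h k (by omega) (by omega))]
    simp

lemma bspline_zero_right (U : ℕ → ℝ) (p : ℕ) :
    ∀ i (t : ℝ), (∀ k, i + 1 ≤ k → k ≤ i + p + 1 → U k ≤ t) → bspline U p i t = 0 := by
  induction p with
  | zero =>
    intro i t h
    have := h (i+1) le_rfl le_rfl
    simp only [bspline, ite_eq_right_iff]
    rintro ⟨_, h2⟩; linarith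
  | succ p ih =>
    intro i t h
    rw [bspline, ih i t (fun k hk hk' => h k hk (by omega)),
      ih (i+1) t (fun k hk hk' => h k (by omega) (by omega))]
    simp

lemma knot_mono (U : ℕ → ℝ) (l : ℕ) (hU : ∀ i, 1 ≤ i → i ≤ l → U i ≤ U (i + 1)) :
    ∀ a b, 1 ≤ a → a ≤ b → b ≤ l + 1 → U a ≤ U b := by
  intro a b ha hab hbl
  induction b with
  | zero => omega
  | succ b ih =>
    rcases Nat.eq_or_lt_of_le hab with h | h
    · rw [h]
    · exact (ih (by omega) (by omega)).trans (hU b (by omega) (by omega))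

lemma bspline_sum_aux (p : ℕ) : ∀ (l : ℕ) (U : ℕ → ℝ), p + 1 ≤ l →
    (∀ i, 1 ≤ i → i ≤ l → U i ≤ U (i + 1)) →
    ∀ t : ℝ, U (p + 1) ≤ t → t < U (l - p + 1) →
    ∑ i ∈ Finset.Icc 1 (l - p), bspline U p i t = 1 := by
  induction p with
  | zero =>
    intro l U hl hU t ht1 ht2
    simp only [Nat.sub_zero] at *
    have mono := knot_mono U l hU
    set S := (Finset.Icc 1 l).filter (fun i => U i ≤ t) with hS
    have h1S : 1 ∈ S := by
      simp only [hS, Finset.mem_filter, Finset.mem_Icc]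
      exact ⟨⟨le_rfl, hl⟩, ht1⟩
    have hne : S.Nonempty := ⟨1, h1S⟩
    set i0 := S.max' hne with hi0
    have hi0S : i0 ∈ S := S.max'_mem hne
    simp only [hS, Finset.mem_filter, Finset.mem_Icc] at hi0S
    obtain ⟨⟨hi01, hi0l⟩, hUi0⟩ := hi0S
    have hlt : t < U (i0 + 1) := by
      by_cases h : i0 = l
      · rw [h]; exact ht2
      · by_contra h'
        push_neg at h'
        have hmem : i0 + 1 ∈ S := by
          simp only [hS, Finset.mem_filter, Finset.mem_Icc]
          exact ⟨⟨by omega, by omega⟩, h'⟩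
        have := S.le_max' _ hmem
        omega
    have huniq : ∀ i ∈ Finset.Icc 1 l, (U i ≤ t ∧ t < U (i + 1)) ↔ i = i0 := by
      intro i hi
      simp only [Finset.mem_Icc] at hi
      constructor
      · rintro ⟨h1, h2⟩
        have hiS : i ∈ S := by
          simp only [hS, Finset.mem_filter, Finset.mem_Icc]; exact ⟨hi, h1⟩
        have hile : i ≤ i0 := S.le_max' _ hiS
        rcases Nat.eq_or_lt_of_le hile with h | h
        · exact h
        · exfalso
          have : U (i + 1) ≤ U i0 := mono (i+1) i0 (by omega) (by omega) (by omega)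
          linarith
      · rintro rfl; exact ⟨hUi0, hlt⟩
    have : ∑ i ∈ Finset.Icc 1 l, bspline U 0 i t
        = ∑ i ∈ Finset.Icc 1 l, if i = i0 then (1:ℝ) else 0 := by
      refine Finset.sum_congr rfl (fun i hi => ?_)
      rw [bspline]
      exact if_congr (huniq i hi) rfl rfl
    rw [this, Finset.sum_ite_eq' (Finset.Icc 1 l) i0 (fun _ => (1:ℝ))]
    simp [Finset.mem_Icc, hi01, hi0l]
  | succ p ih =>
    intro l U hl hU t ht1 ht2
    have mono := knot_mono U l hU
    set N := l - p with hN
    have hN2 : 2 ≤ N := by omega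
    have hNl : N + 1 ≤ l + 1 := by omega
    have hlp : l - (p + 1) = N - 1 := by omega
    have ht2' : t < U N := by
      have : l - (p + 1) + 1 = N := by omega
      rwa [this] at ht2
    -- the two halves of the recursion
    set c : ℕ → ℝ := fun j => if U (j + p + 1) = U j then 0
        else (t - U j) / (U (j + p + 1) - U j) * bspline U p j t with hc
    set d : ℕ → ℝ := fun j => if U (j + p + 1) = U j then 0
        else (U (j + p + 1) - t) / (U (j + p + 1) - U j) * bspline U p j t with hd
    have hB1 : bspline U p 1 t = 0 := by
      apply bspline_zero_right
      intro k hk1 hk2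
      calc U k ≤ U (p + 2) := mono k (p + 2) (by omega) (by omega) (by omega)
        _ ≤ t := ht1
    have hBN : bspline U p N t = 0 := by
      apply bspline_zero_left
      intro k hk1 hk2
      exact lt_of_lt_of_le ht2' (mono N k (by omega) hk1 (by omega))
    have key : ∀ j, 1 ≤ j → j ≤ N → c j + d j = bspline U p j t := by
      intro j hj1 hjN
      rcases eq_or_lt_of_le hj1 with h1 | h1
      · simp [hc, hd, ← h1, hB1]
      rcases eq_or_lt_of_le hjN with hNe | hNe
      · simp [hc, hd, hNe, hBN]
      by_cases hD : U (j + p + 1) = U j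
      · have hBj : bspline U p j t = 0 := by
          rcases lt_or_ge t (U j) with h | h
          · apply bspline_zero_left
            intro k hk1 hk2
            exact lt_of_lt_of_le h (mono j k (by omega) hk1 (by omega))
          · apply bspline_zero_right
            intro k hk1 hk2
            calc U k ≤ U (j + p + 1) := mono k (j + p + 1) (by omega) hk2 (by omega)
              _ = U j := hD
              _ ≤ t := h
        simp [hc, hd, hD, hBj]
      · have hD' : U (j + p + 1) - U j ≠ 0 := sub_ne_zero.mpr hD
        simp only [hc, hd, if_neg hD]
        field_simp
        ring
    -- expand the degree-(p+1) splines
    have expand : ∀ i, bspline U (p + 1) i t = c i + d (i + 1) := by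
      intro i
      rw [bspline]
      have e1 : i + 1 + p + 1 = i + p + 2 := by omega
      simp only [hc, hd, e1]
    rw [hlp]
    calc ∑ i ∈ Finset.Icc 1 (N - 1), bspline U (p + 1) i t
        = ∑ i ∈ Finset.Icc 1 (N - 1), (c i + d (i + 1)) := by
          exact Finset.sum_congr rfl (fun i _ => expand i)
      _ = ∑ i ∈ Finset.Icc 1 (N - 1), c i + ∑ i ∈ Finset.Icc 1 (N - 1), d (i + 1) :=
          Finset.sum_add_distrib
      _ = ∑ i ∈ Finset.Icc 1 N, c i + ∑ i ∈ Finset.Icc 1 N, d i := by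
          congr 1
          · have hNeq : N - 1 + 1 = N := by omega
            have := Finset.sum_Icc_succ_top (show 1 ≤ N - 1 + 1 by omega) c
            rw [hNeq] at this
            rw [this]
            have : c N = 0 := by simp [hc, hBN]
            rw [this, add_zero]
          · have hIcc : Finset.Icc 1 N = insert 1 (Finset.Icc 2 N) := by
              ext x
              simp only [Finset.mem_Icc, Finset.mem_insert]
              omega
            rw [hIcc, Finset.sum_insert (by simp)]
            have hd1 : d 1 = 0 := by simp [hd, hB1]
            rw [hd1, zero_add]
            apply Finset.sum_nbij' (fun i => i + 1) (fun j => j - 1)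
            all_goals intros; simp_all [Finset.mem_Icc]; try omega
      _ = ∑ j ∈ Finset.Icc 1 N, bspline U p j t := by
          rw [← Finset.sum_add_distrib]
          refine Finset.sum_congr rfl (fun j hj => ?_)
          simp only [Finset.mem_Icc] at hj
          exact key j hj.1 hj.2
      _ = 1 := by
          apply ih l U (by omega) hU t
          · exact le_trans (mono (p + 1) (p + 2) (by omega) (by omega) (by omega)) ht1
          · have : l - p + 1 = N + 1 := by omega
            rw [this]
            exact lt_of_lt_of_le ht2' (mono N (N + 1) (by omega) (by omega) (by omega))

theorem bspline_partition_of_unity (p l : ℕ) (U : ℕ → ℝ)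
    (hl : p + 1 ≤ l)
    (hU : ∀ i, 1 ≤ i → i ≤ l → U i ≤ U (i + 1))
    (t : ℝ) (ht : t ∈ Set.Ico (U (p + 1)) (U (l - p + 1))) :
    ∑ i ∈ Finset.Icc 1 (l - p), bspline U p i t = 1 :=
  bspline_sum_aux p l U hl hU t ht.1 ht.2
end

section
/- Let p ≥ 1 be an integer and u₁ ≤ u₂ ≤ … ≤ u_{l+1} a nondecreasing knot vector such that the interior knots are simple, i.e. u_{p+1} < u_{p+2} < … < u_{l−p+1}. Then each B-spline basis function B_{i,p} (1 ≤ i ≤ l − p) is (p − 1)-times continuously differentiable on the open interval (u_{p+1}, u_{l−p+1}). -/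
open MeasureTheory Set Filter Topology Classical

lemma maxpow_hasDerivAt (x0 : ℝ) (q : ℕ) (t : ℝ) :
    HasDerivAt (fun s => max (s - x0) 0 ^ (q+2)) ((q+2) * max (t - x0) 0 ^ (q+1)) t := by
  rcases lt_trichotomy t x0 with h | h | h
  · have h0 : max (t - x0) 0 = 0 := max_eq_right (by linarith)
    rw [h0, zero_pow (Nat.succ_ne_zero q), mul_zero]
    have : (fun s : ℝ => max (s - x0) 0 ^ (q+2)) =ᶠ[𝓝 t] fun _ => (0:ℝ) := by
      filter_upwards [Iio_mem_nhds h] with s hs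
      rw [max_eq_right (by simp at hs; linarith), zero_pow (by omega)]
    exact (hasDerivAt_const t 0).congr_of_eventuallyEq this
  · subst h
    have h0 : max (t - t) 0 = 0 := by simp
    rw [h0, zero_pow (Nat.succ_ne_zero q), mul_zero]
    rw [hasDerivAt_iff_tendsto_slope]
    apply squeeze_zero_norm' (a := fun s => |s - t| ^ (q+1))
    · filter_upwards [self_mem_nhdsWithin] with s hs
      have hmax : max (s - t) 0 ≤ |s - t| := max_le (le_abs_self _) (abs_nonneg _)
      have hmax0 : (0:ℝ) ≤ max (s - t) 0 := le_max_right _ _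
      have hsne : s - t ≠ 0 := sub_ne_zero.2 hs
      rw [slope_def_field]
      have : ‖(max (s - t) 0 ^ (q+2) - max (t - t) 0 ^ (q+2)) / (s - t)‖
          = max (s - t) 0 ^ (q+2) / |s - t| := by
        rw [h0, zero_pow (by omega), sub_zero, norm_div, Real.norm_eq_abs, Real.norm_eq_abs,
          abs_of_nonneg (pow_nonneg hmax0 _)]
      rw [this]
      rw [div_le_iff₀ (by positivity)]
      calc max (s - t) 0 ^ (q+2) ≤ |s - t| ^ (q+2) := pow_le_pow_left₀ hmax0 hmax _
        _ = |s - t| ^ (q+1) * |s - t| := by ring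
    · have : Filter.Tendsto (fun s : ℝ => |s - t| ^ (q+1)) (𝓝 t) (𝓝 (|t - t| ^ (q+1))) := by
        apply Continuous.tendsto
        continuity
      simp only [sub_self, abs_zero, zero_pow (Nat.succ_ne_zero q)] at this
      exact this.mono_left nhdsWithin_le_nhds
  · have hmax : max (t - x0) 0 = t - x0 := max_eq_left (by linarith)
    have hd : HasDerivAt (fun s : ℝ => (s - x0) ^ (q+2)) ((q+2) * (t - x0) ^ (q+1)) t := by
      have := ((hasDerivAt_id t).sub_const x0).fun_pow (q+2)
      simpa using this
    rw [hmax]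
    apply hd.congr_of_eventuallyEq
    filter_upwards [Ioi_mem_nhds h] with s hs
    rw [max_eq_left (by simp at hs; linarith)]

lemma maxpow_contDiff (x0 : ℝ) (q : ℕ) :
    ContDiff ℝ (q : ℕ) (fun s : ℝ => max (s - x0) 0 ^ (q+1)) := by
  induction q with
  | zero =>
    rw [CharP.cast_eq_zero, contDiff_zero]
    exact ((continuous_id.sub continuous_const).max continuous_const).pow 1
  | succ q ih =>
    rw [show ((q+1:ℕ) : WithTop ℕ∞) = (q:ℕ) + 1 by push_cast; ring]
    rw [contDiff_succ_iff_deriv]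
    refine ⟨fun t => (maxpow_hasDerivAt x0 q t).differentiableAt, by simp, ?_⟩
    have : deriv (fun s : ℝ => max (s - x0) 0 ^ (q+2)) = fun t => (q+2) * max (t - x0) 0 ^ (q+1) := by
      funext t; exact (maxpow_hasDerivAt x0 q t).deriv
    rw [this]
    exact contDiff_const.mul ih

lemma bspline_loc_poly (U : ℕ → ℝ) (a b : ℝ) :
    ∀ q i : ℕ, (∀ k, i ≤ k → k ≤ i + q + 1 → U k ≤ a ∨ b ≤ U k) →
    ∃ P : ℝ → ℝ, ContDiff ℝ (⊤:ℕ∞) P ∧ ∀ t ∈ Set.Ioo a b, bspline U q i t = P t := by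
  intro q
  induction q with
  | zero =>
    intro i hk
    refine ⟨fun _ => if U i ≤ a ∧ b ≤ U (i+1) then 1 else 0, contDiff_const, ?_⟩
    intro t ht
    obtain ⟨ht1, ht2⟩ := ht
    have hiff : (U i ≤ t ∧ t < U (i+1)) ↔ (U i ≤ a ∧ b ≤ U (i+1)) := by
      constructor
      · rintro ⟨hA, hB⟩
        rcases hk i le_rfl (by omega) with h1 | h1
        · rcases hk (i+1) (by omega) (by omega) with h2 | h2
          · exact absurd hB (by linarith)
          · exact ⟨h1, h2⟩
        · exact absurd hA (by linarith)
      · rintro ⟨hA, hB⟩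
        exact ⟨by linarith, by linarith⟩
    simp only [bspline]
    rw [if_congr hiff rfl rfl]
  | succ q ih =>
    intro i hk
    obtain ⟨P1, hP1s, hP1⟩ := ih i (fun k h1 h2 => hk k h1 (by omega))
    obtain ⟨P2, hP2s, hP2⟩ := ih (i+1) (fun k h1 h2 => hk k (by omega) (by omega))
    refine ⟨fun t => (if U (i+q+1) = U i then 0 else (t - U i) / (U (i+q+1) - U i) * P1 t)
        + (if U (i+q+2) = U (i+1) then 0 else (U (i+q+2) - t) / (U (i+q+2) - U (i+1)) * P2 t),
      ?_, ?_⟩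
    · apply ContDiff.add
      · split_ifs with h
        · exact contDiff_const
        · exact ((contDiff_id.sub contDiff_const).div_const _).mul hP1s
      · split_ifs with h
        · exact contDiff_const
        · exact ((contDiff_const.sub contDiff_id).div_const _).mul hP2s
    · intro t ht
      show bspline U (q+1) i t = _
      simp only [bspline]
      rw [hP1 t ht, hP2 t ht]

lemma bspline_loc_knot (U : ℕ → ℝ) (a b x0 : ℝ) (hax : a < x0) (hxb : x0 < b) (j0 : ℕ)
    (hUj0 : U j0 = x0) :
    ∀ q i : ℕ, i ≤ j0 → j0 ≤ i + q + 1 →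
    (∀ k, i ≤ k → k ≤ i + q + 1 → (k < j0 → U k ≤ a) ∧ (j0 < k → b ≤ U k)) →
    ∃ P : ℝ → ℝ, ContDiff ℝ (⊤:ℕ∞) P ∧ ∀ t ∈ Set.Ioo a b,
      bspline U q i t = P t +
        ((U (i+q+1) - U i) / ∏ k ∈ (Finset.Icc i (i+q+1)).erase j0, (U k - x0)) *
          ((t - x0)^q * (if x0 ≤ t then 1 else 0)) := by
  intro q
  induction q with
  | zero =>
    intro i hij0 hj0i hk
    rcases (show j0 = i ∨ j0 = i + 1 by omega) with hc0 | hc0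
    · -- j0 = i, U i = x0, U (i+1) ≥ b
      have hUi : U i = x0 := by rw [← hc0]; exact hUj0
      have hb1 : b ≤ U (i+1) := (hk (i+1) (by omega) (by omega)).2 (by omega)
      have hset : (Finset.Icc i (i+0+1)).erase j0 = {i+1} := by
        ext k
        simp only [Finset.mem_erase, Finset.mem_Icc, Finset.mem_singleton]
        omega
      refine ⟨fun _ => 0, contDiff_const, ?_⟩
      intro t ht
      obtain ⟨ht1, ht2⟩ := ht
      simp only [bspline, hset, Finset.prod_singleton]
      have h2 : U (i+1) - x0 ≠ 0 := by intro h; linarith [sub_eq_zero.1 h]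
      have h1 : U (i+0+1) - U i = U (i+1) - x0 := by rw [hUi]
      rw [h1, div_self h2]
      have hcond : (U i ≤ t ∧ t < U (i+1)) ↔ x0 ≤ t := by
        constructor
        · rintro ⟨hA, hB⟩; rwa [hUi] at hA
        · intro hA; exact ⟨by rw [hUi]; exact hA, by linarith⟩
      rw [if_congr hcond rfl rfl]
      split_ifs <;> norm_num
    · -- j0 = i+1, U (i+1) = x0, U i ≤ a
      have hUi1 : U (i+1) = x0 := by rw [← hc0]; exact hUj0
      have ha1 : U i ≤ a := (hk i (by omega) (by omega)).1 (by omega)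
      have hset : (Finset.Icc i (i+0+1)).erase j0 = {i} := by
        ext k
        simp only [Finset.mem_erase, Finset.mem_Icc, Finset.mem_singleton]
        omega
      refine ⟨fun _ => 1, contDiff_const, ?_⟩
      intro t ht
      obtain ⟨ht1, ht2⟩ := ht
      simp only [bspline, hset, Finset.prod_singleton]
      have h2 : U i - x0 ≠ 0 := by intro h; linarith [sub_eq_zero.1 h]
      have h1 : (U (i+0+1) - U i) / (U i - x0) = -1 := by
        rw [show i+0+1 = i+1 from rfl, hUi1]
        field_simp
        ring
      rw [h1]
      have hcond : (U i ≤ t ∧ t < U (i+1)) ↔ ¬ (x0 ≤ t) := by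
        rw [hUi1]
        constructor
        · rintro ⟨hA, hB⟩; linarith
        · intro hA; exact ⟨by linarith, by linarith⟩
      rw [if_congr hcond rfl rfl]
      split_ifs <;> norm_num
  | succ q ih =>
    intro i hij0 hj0i hk
    simp only [show i + (q+1) + 1 = i + q + 2 from by omega]
    rcases (show j0 = i ∨ (i+1 ≤ j0 ∧ j0 ≤ i+q+1) ∨ j0 = i+q+2 by omega) with hc0 | hc | hc0
    · -- j0 = i
      have hUi : U i = x0 := by rw [← hc0]; exact hUj0
      have hb_all : ∀ k, i+1 ≤ k → k ≤ i+q+2 → b ≤ U k := fun k h1 h2 =>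
        (hk k (by omega) (by omega)).2 (by omega)
      obtain ⟨P1, hP1s, hB1⟩ := ih i (by omega) (by omega) (fun k h1 h2 =>
        ⟨fun h => absurd h (by omega), fun h => hb_all k (by omega) (by omega)⟩)
      obtain ⟨P2, hP2s, hB2⟩ := bspline_loc_poly U a b q (i+1)
        (fun k h1 h2 => Or.inr (hb_all k h1 (by omega)))
      have hbq1 : b ≤ U (i+q+1) := hb_all (i+q+1) (by omega) (by omega)
      have hbq2 : b ≤ U (i+q+2) := hb_all (i+q+2) (by omega) (by omega)
      have d1ne : U (i+q+1) ≠ U i := by intro h; rw [hUi] at h; linarith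
      have hd1 : U (i+q+1) - U i ≠ 0 := sub_ne_zero.2 d1ne
      have hA1 : (Finset.Icc i (i+q+1)).erase j0 = Finset.Icc (i+1) (i+q+1) := by
        ext k; simp only [Finset.mem_erase, Finset.mem_Icc]; omega
      have hA : (Finset.Icc i (i+q+2)).erase j0 = insert (i+q+2) (Finset.Icc (i+1) (i+q+1)) := by
        ext k; simp only [Finset.mem_erase, Finset.mem_Icc, Finset.mem_insert]; omega
      have hnm : i+q+2 ∉ Finset.Icc (i+1) (i+q+1) := by simp
      set M : ℝ := ∏ k ∈ Finset.Icc (i+1) (i+q+1), (U k - x0) with hM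
      have Mne : M ≠ 0 := by
        rw [hM]
        apply Finset.prod_ne_zero_iff.2
        intro k hk'
        simp only [Finset.mem_Icc] at hk'
        have := hb_all k hk'.1 (by omega)
        intro h; linarith [sub_eq_zero.1 h]
      have hU2ne : U (i+q+2) - x0 ≠ 0 := by intro h; linarith [sub_eq_zero.1 h]
      have hp1 : ∏ k ∈ (Finset.Icc i (i+q+1)).erase j0, (U k - x0) = M := by
        rw [hA1, hM]
      have hp : ∏ k ∈ (Finset.Icc i (i+q+2)).erase j0, (U k - x0)
          = (U (i+q+2) - x0) * M := by
        rw [hA, Finset.prod_insert hnm, hM]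
      have key : ∀ t : ℝ, (t - U i)/(U (i+q+1) - U i) * ((U (i+q+1) - U i)/M)
          = ((U (i+q+2) - U i)/((U (i+q+2) - x0) * M)) * (t - x0) := by
        intro t
        rw [hUi, div_mul_div_comm, div_mul_eq_mul_div,
          div_eq_div_iff (mul_ne_zero (by rwa [hUi] at hd1) Mne) (mul_ne_zero hU2ne Mne)]
        ring
      refine ⟨fun t => (t - U i)/(U (i+q+1) - U i) * P1 t +
        (if U (i+q+2) = U (i+1) then 0 else (U (i+q+2) - t)/(U (i+q+2) - U (i+1)) * P2 t), ?_, ?_⟩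
      · apply ContDiff.add
        · exact ((contDiff_id.sub contDiff_const).div_const _).mul hP1s
        · split_ifs
          · exact contDiff_const
          · exact ((contDiff_const.sub contDiff_id).div_const _).mul hP2s
      · intro t ht
        simp only [bspline]
        rw [if_neg d1ne, hB1 t ht, hB2 t ht, hp1, hp]
        by_cases hd2c : U (i+q+2) = U (i+1)
        · rw [if_pos hd2c]
          linear_combination ((t - x0)^q * (if x0 ≤ t then (1:ℝ) else 0)) * key t
        · rw [if_neg hd2c]
          linear_combination ((t - x0)^q * (if x0 ≤ t then (1:ℝ) else 0)) * key t
    · -- interior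
      obtain ⟨hc1, hc2⟩ := hc
      obtain ⟨P1, hP1s, hB1⟩ := ih i hij0 (by omega) (fun k h1 h2 =>
        ⟨fun h => (hk k h1 (by omega)).1 h, fun h => (hk k h1 (by omega)).2 h⟩)
      obtain ⟨P2, hP2s, hB2⟩ := ih (i+1) (by omega) (by omega) (fun k h1 h2 =>
        ⟨fun h => (hk k (by omega) (by omega)).1 h, fun h => (hk k (by omega) (by omega)).2 h⟩)
      simp only [show i+1+q+1 = i+q+2 from by omega] at hB2
      have hUia : U i ≤ a := (hk i le_rfl (by omega)).1 (by omega)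
      have hU2b : b ≤ U (i+q+2) := (hk (i+q+2) (by omega) (by omega)).2 (by omega)
      have d1ne : U (i+q+1) ≠ U i := by
        by_cases hj : j0 = i+q+1
        · have h1 : U (i+q+1) = x0 := by rw [← hj]; exact hUj0
          intro h; rw [h1] at h; linarith
        · have h1 : b ≤ U (i+q+1) := (hk (i+q+1) (by omega) (by omega)).2 (by omega)
          intro h; rw [h] at h1; linarith
      have d2ne : U (i+q+2) ≠ U (i+1) := by
        by_cases hj : j0 = i+1
        · have h1 : U (i+1) = x0 := by rw [← hj]; exact hUj0
          intro h; rw [h1] at h; linarith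
        · have h1 : U (i+1) ≤ a := (hk (i+1) (by omega) (by omega)).1 (by omega)
          intro h; rw [h] at hU2b; linarith
      have hd1 : U (i+q+1) - U i ≠ 0 := sub_ne_zero.2 d1ne
      have hd2 : U (i+q+2) - U (i+1) ≠ 0 := sub_ne_zero.2 d2ne
      have hA1 : (Finset.Icc i (i+q+1)).erase j0
          = insert i ((Finset.Icc (i+1) (i+q+1)).erase j0) := by
        ext k; simp only [Finset.mem_erase, Finset.mem_Icc, Finset.mem_insert]; omega
      have hA2 : (Finset.Icc (i+1) (i+q+2)).erase j0
          = insert (i+q+2) ((Finset.Icc (i+1) (i+q+1)).erase j0) := by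
        ext k; simp only [Finset.mem_erase, Finset.mem_Icc, Finset.mem_insert]; omega
      have hA : (Finset.Icc i (i+q+2)).erase j0
          = insert i (insert (i+q+2) ((Finset.Icc (i+1) (i+q+1)).erase j0)) := by
        ext k; simp only [Finset.mem_erase, Finset.mem_Icc, Finset.mem_insert]; omega
      have hnm1 : i ∉ (Finset.Icc (i+1) (i+q+1)).erase j0 := by
        simp only [Finset.mem_erase, Finset.mem_Icc]; omega
      have hnm2 : i+q+2 ∉ (Finset.Icc (i+1) (i+q+1)).erase j0 := by
        simp only [Finset.mem_erase, Finset.mem_Icc]; omega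
      have hnm3 : i ∉ insert (i+q+2) ((Finset.Icc (i+1) (i+q+1)).erase j0) := by
        simp only [Finset.mem_insert, Finset.mem_erase, Finset.mem_Icc]; omega
      set M : ℝ := ∏ k ∈ (Finset.Icc (i+1) (i+q+1)).erase j0, (U k - x0) with hM
      have Mne : M ≠ 0 := by
        rw [hM]
        apply Finset.prod_ne_zero_iff.2
        intro k hk'
        simp only [Finset.mem_erase, Finset.mem_Icc] at hk'
        rcases (show k < j0 ∨ j0 < k by omega) with h | h
        · have := (hk k (by omega) (by omega)).1 h
          intro hz; linarith [sub_eq_zero.1 hz]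
        · have := (hk k (by omega) (by omega)).2 h
          intro hz; linarith [sub_eq_zero.1 hz]
      have hUine : U i - x0 ≠ 0 := by intro h; linarith [sub_eq_zero.1 h]
      have hU2ne : U (i+q+2) - x0 ≠ 0 := by intro h; linarith [sub_eq_zero.1 h]
      have hp1 : ∏ k ∈ (Finset.Icc i (i+q+1)).erase j0, (U k - x0) = (U i - x0) * M := by
        rw [hA1, Finset.prod_insert hnm1, hM]
      have hp2 : ∏ k ∈ (Finset.Icc (i+1) (i+q+2)).erase j0, (U k - x0)
          = (U (i+q+2) - x0) * M := by
        rw [hA2, Finset.prod_insert hnm2, hM]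
      have hp : ∏ k ∈ (Finset.Icc i (i+q+2)).erase j0, (U k - x0)
          = (U i - x0) * ((U (i+q+2) - x0) * M) := by
        rw [hA, Finset.prod_insert hnm3, Finset.prod_insert hnm2, hM]
      have key : ∀ t : ℝ,
          (t - U i)/(U (i+q+1) - U i) * ((U (i+q+1) - U i)/((U i - x0) * M))
          + (U (i+q+2) - t)/(U (i+q+2) - U (i+1)) * ((U (i+q+2) - U (i+1))/((U (i+q+2) - x0) * M))
          = ((U (i+q+2) - U i)/((U i - x0) * ((U (i+q+2) - x0) * M))) * (t - x0) := by
        intro t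
        rw [div_mul_div_comm, div_mul_div_comm, div_mul_eq_mul_div,
          div_add_div _ _ (mul_ne_zero hd1 (mul_ne_zero hUine Mne))
            (mul_ne_zero hd2 (mul_ne_zero hU2ne Mne)),
          div_eq_div_iff
            (mul_ne_zero (mul_ne_zero hd1 (mul_ne_zero hUine Mne))
              (mul_ne_zero hd2 (mul_ne_zero hU2ne Mne)))
            (mul_ne_zero hUine (mul_ne_zero hU2ne Mne))]
        ring
      refine ⟨fun t => (t - U i)/(U (i+q+1) - U i) * P1 t +
        (U (i+q+2) - t)/(U (i+q+2) - U (i+1)) * P2 t, ?_, ?_⟩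
      · exact (((contDiff_id.sub contDiff_const).div_const _).mul hP1s).add
          (((contDiff_const.sub contDiff_id).div_const _).mul hP2s)
      · intro t ht
        simp only [bspline]
        rw [if_neg d1ne, if_neg d2ne, hB1 t ht, hB2 t ht, hp1, hp2, hp]
        linear_combination ((t - x0)^q * (if x0 ≤ t then (1:ℝ) else 0)) * key t
    · -- j0 = i+q+2
      have hU2 : U (i+q+2) = x0 := by rw [← hc0]; exact hUj0
      have ha_all : ∀ k, i ≤ k → k ≤ i+q+1 → U k ≤ a := fun k h1 h2 =>
        (hk k h1 (by omega)).1 (by omega)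
      obtain ⟨P1, hP1s, hB1⟩ := bspline_loc_poly U a b q i
        (fun k h1 h2 => Or.inl (ha_all k h1 h2))
      obtain ⟨P2, hP2s, hB2⟩ := ih (i+1) (by omega) (by omega) (fun k h1 h2 =>
        ⟨fun h => ha_all k (by omega) (by omega), fun h => absurd h (by omega)⟩)
      simp only [show i+1+q+1 = i+q+2 from by omega] at hB2
      have hUi1a : U (i+1) ≤ a := ha_all (i+1) (by omega) (by omega)
      have hUia : U i ≤ a := ha_all i le_rfl (by omega)
      have d2ne : U (i+q+2) ≠ U (i+1) := by intro h; rw [hU2] at h; linarith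
      have hd2 : U (i+q+2) - U (i+1) ≠ 0 := sub_ne_zero.2 d2ne
      have hA2 : (Finset.Icc (i+1) (i+q+2)).erase j0 = Finset.Icc (i+1) (i+q+1) := by
        ext k; simp only [Finset.mem_erase, Finset.mem_Icc]; omega
      have hA : (Finset.Icc i (i+q+2)).erase j0 = insert i (Finset.Icc (i+1) (i+q+1)) := by
        ext k; simp only [Finset.mem_erase, Finset.mem_Icc, Finset.mem_insert]; omega
      have hnm : i ∉ Finset.Icc (i+1) (i+q+1) := by simp
      set M : ℝ := ∏ k ∈ Finset.Icc (i+1) (i+q+1), (U k - x0) with hM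
      have Mne : M ≠ 0 := by
        rw [hM]
        apply Finset.prod_ne_zero_iff.2
        intro k hk'
        simp only [Finset.mem_Icc] at hk'
        have := ha_all k (by omega) (by omega)
        intro h; linarith [sub_eq_zero.1 h]
      have hUine : U i - x0 ≠ 0 := by intro h; linarith [sub_eq_zero.1 h]
      have hp2 : ∏ k ∈ (Finset.Icc (i+1) (i+q+2)).erase j0, (U k - x0) = M := by
        rw [hA2, hM]
      have hp : ∏ k ∈ (Finset.Icc i (i+q+2)).erase j0, (U k - x0) = (U i - x0) * M := by
        rw [hA, Finset.prod_insert hnm, hM]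
      have key : ∀ t : ℝ, (U (i+q+2) - t)/(U (i+q+2) - U (i+1)) * ((U (i+q+2) - U (i+1))/M)
          = ((U (i+q+2) - U i)/((U i - x0) * M)) * (t - x0) := by
        intro t
        rw [div_mul_div_comm, div_mul_eq_mul_div,
          div_eq_div_iff (mul_ne_zero hd2 Mne) (mul_ne_zero hUine Mne), hU2]
        ring
      refine ⟨fun t => (if U (i+q+1) = U i then 0
          else (t - U i)/(U (i+q+1) - U i) * P1 t) +
        (U (i+q+2) - t)/(U (i+q+2) - U (i+1)) * P2 t, ?_, ?_⟩
      · apply ContDiff.add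
        · split_ifs
          · exact contDiff_const
          · exact ((contDiff_id.sub contDiff_const).div_const _).mul hP1s
        · exact ((contDiff_const.sub contDiff_id).div_const _).mul hP2s
      · intro t ht
        simp only [bspline]
        rw [if_neg d2ne, hB1 t ht, hB2 t ht, hp2, hp]
        by_cases hd1c : U (i+q+1) = U i
        · rw [if_pos hd1c]
          linear_combination ((t - x0)^q * (if x0 ≤ t then (1:ℝ) else 0)) * key t
        · rw [if_neg hd1c]
          linear_combination ((t - x0)^q * (if x0 ≤ t then (1:ℝ) else 0)) * key t

theorem bspline_smoothness_simple_knots (p l : ℕ) (hp : 1 ≤ p) (U : ℕ → ℝ)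
    (hU : ∀ j, 1 ≤ j → j ≤ l → U j ≤ U (j + 1))
    (hsimple : ∀ j, p + 1 ≤ j → j ≤ l - p → U j < U (j + 1))
    (i : ℕ) (hi : 1 ≤ i) (hil : i ≤ l - p) :
    ContDiffOn ℝ (p - 1 : ℕ) (bspline U p i)
      (Set.Ioo (U (p + 1)) (U (l - p + 1))) := by
  obtain ⟨p', rfl⟩ : ∃ p', p = p' + 1 := ⟨p - 1, by omega⟩
  simp only [Nat.add_sub_cancel]
  have hpl : p' + 1 + 1 ≤ l + 1 := by omega
  have hiw : i + p' + 2 ≤ l + 1 := by omega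
  have hmono : ∀ j k, 1 ≤ j → j ≤ k → k ≤ l + 1 → U j ≤ U k := by
    intro j k hj hjk hkl
    induction k with
    | zero => exact absurd (hj.trans hjk) (by omega)
    | succ k ihk =>
      rcases Nat.lt_or_ge k j with h | h
      · have : j = k + 1 := by omega
        rw [this]
      · exact (ihk (by omega) (by omega)).trans (hU k (by omega) (by omega))
  intro x hx
  obtain ⟨hx1, hx2⟩ := hx
  set F : Finset ℕ := Finset.Icc i (i+p'+2) with hF
  set Sa : Finset ℝ := insert (U (p'+1+1)) ((F.filter (fun k => U k < x)).image U) with hSa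
  set Sb : Finset ℝ := insert (U (l-(p'+1)+1)) ((F.filter (fun k => x < U k)).image U) with hSb
  have hSane : Sa.Nonempty := ⟨_, Finset.mem_insert_self _ _⟩
  have hSbne : Sb.Nonempty := ⟨_, Finset.mem_insert_self _ _⟩
  set a : ℝ := Sa.max' hSane with ha
  set b : ℝ := Sb.min' hSbne with hb
  have ha_lt : a < x := by
    rw [ha]
    rw [Finset.max'_lt_iff]
    intro y hy
    rw [hSa] at hy
    rcases Finset.mem_insert.1 hy with h | h
    · rw [h]; exact hx1
    · obtain ⟨k, hk, rfl⟩ := Finset.mem_image.1 h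
      exact (Finset.mem_filter.1 hk).2
  have hb_lt : x < b := by
    rw [hb]
    rw [Finset.lt_min'_iff]
    intro y hy
    rw [hSb] at hy
    rcases Finset.mem_insert.1 hy with h | h
    · rw [h]; exact hx2
    · obtain ⟨k, hk, rfl⟩ := Finset.mem_image.1 h
      exact (Finset.mem_filter.1 hk).2
  have hUka : ∀ k, i ≤ k → k ≤ i+p'+2 → U k < x → U k ≤ a := by
    intro k h1 h2 h3
    apply Finset.le_max'
    rw [hSa]
    exact Finset.mem_insert_of_mem (Finset.mem_image.2 ⟨k,
      Finset.mem_filter.2 ⟨Finset.mem_Icc.2 ⟨h1, h2⟩, h3⟩, rfl⟩)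
  have hUkb : ∀ k, i ≤ k → k ≤ i+p'+2 → x < U k → b ≤ U k := by
    intro k h1 h2 h3
    apply Finset.min'_le
    rw [hSb]
    exact Finset.mem_insert_of_mem (Finset.mem_image.2 ⟨k,
      Finset.mem_filter.2 ⟨Finset.mem_Icc.2 ⟨h1, h2⟩, h3⟩, rfl⟩)
  have hdup : ∀ k1 k2, 1 ≤ k1 → k1 < k2 → k2 ≤ l+1 → U k1 = x → U k2 = x → False := by
    intro k1 k2 h1 h2 h3 hv1 hv2
    have hk1low : p' + 1 + 1 ≤ k1 := by
      by_contra h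
      push_neg at h
      have := hmono k1 (p'+1+1) h1 (by omega) hpl
      linarith
    have hk2high : k2 ≤ l - (p'+1) := by
      by_contra h
      push_neg at h
      have := hmono (l-(p'+1)+1) k2 (by omega) (by omega) h3
      linarith
    have hs : U k1 < U (k1+1) := hsimple k1 (by omega) (by omega)
    have hm : U (k1+1) ≤ U k2 := hmono (k1+1) k2 (by omega) (by omega) (by omega)
    linarith
  have hT : (fun t : ℝ => (t - x)^(p'+1) * (if x ≤ t then (1:ℝ) else 0))
      = fun t => max (t - x) 0 ^ (p'+1) := by
    funext t
    split_ifs with h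
    · rw [mul_one, max_eq_left (by linarith)]
    · rw [mul_zero, max_eq_right (by linarith), zero_pow (by omega)]
  by_cases hex : ∃ j0, i ≤ j0 ∧ j0 ≤ i+p'+2 ∧ U j0 = x
  · obtain ⟨j0, hj01, hj02, hUj0⟩ := hex
    have hkprop : ∀ k, i ≤ k → k ≤ i + (p'+1) + 1 →
        (k < j0 → U k ≤ a) ∧ (j0 < k → b ≤ U k) := by
      intro k h1 h2
      have h2' : k ≤ i+p'+2 := by omega
      constructor
      · intro h
        have hle : U k ≤ U j0 := hmono k j0 (by omega) (by omega) (by omega)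
        rcases eq_or_lt_of_le hle with he | hlt
        · exact (hdup k j0 (by omega) h (by omega) (by rw [he, hUj0]) hUj0).elim
        · exact hUka k h1 h2' (by rw [hUj0] at hlt; exact hlt)
      · intro h
        have hle : U j0 ≤ U k := hmono j0 k (by omega) (by omega) (by omega)
        rcases eq_or_lt_of_le hle with he | hlt
        · exact (hdup j0 k (by omega) h (by omega) hUj0 (by rw [← he, hUj0])).elim
        · exact hUkb k h1 h2' (by rw [hUj0] at hlt; exact hlt)
    obtain ⟨P, hPs, hBP⟩ := bspline_loc_knot U a b x ha_lt hb_lt j0 hUj0 (p'+1) i hj01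
      (by omega) hkprop
    have hPs' : ContDiff ℝ (p' : ℕ) P := hPs.of_le (by exact_mod_cast le_top)
    have hsm : ContDiff ℝ (p' : ℕ) (fun t => P t +
        ((U (i+(p'+1)+1) - U i) / ∏ k ∈ (Finset.Icc i (i+(p'+1)+1)).erase j0, (U k - x)) *
          ((t - x)^(p'+1) * (if x ≤ t then 1 else 0))) := by
      apply hPs'.add
      apply ContDiff.mul contDiff_const
      rw [hT]
      exact maxpow_contDiff x p'
    have hco : ContDiffOn ℝ (p' : ℕ) (bspline U (p'+1) i) (Set.Ioo a b) :=
      hsm.contDiffOn.congr hBP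
    exact (hco.contDiffAt (Ioo_mem_nhds ha_lt hb_lt)).contDiffWithinAt
  · push_neg at hex
    have hkprop : ∀ k, i ≤ k → k ≤ i + (p'+1) + 1 → U k ≤ a ∨ b ≤ U k := by
      intro k h1 h2
      have h2' : k ≤ i+p'+2 := by omega
      rcases lt_trichotomy (U k) x with h | h | h
      · exact Or.inl (hUka k h1 h2' h)
      · exact absurd h (hex k h1 h2')
      · exact Or.inr (hUkb k h1 h2' h)
    obtain ⟨P, hPs, hBP⟩ := bspline_loc_poly U a b (p'+1) i hkprop
    have hPs' : ContDiff ℝ (p' : ℕ) P := hPs.of_le (by exact_mod_cast le_top)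
    have hco : ContDiffOn ℝ (p' : ℕ) (bspline U (p'+1) i) (Set.Ioo a b) :=
      hPs'.contDiffOn.congr hBP
    exact (hco.contDiffAt (Ioo_mem_nhds ha_lt hb_lt)).contDiffWithinAt
end

section
/- Knot insertion preserves the B-spline curve: let p ≥ 1 be an integer, u₁ ≤ … ≤ u_{l+1} a nondecreasing knot vector, P₁, …, P_{l−p} ∈ ℝ^d control points, and let k be an index with p + 1 ≤ k ≤ l − p and ū ∈ [u_k, u_{k+1}) a new knot. Let U† = (u₁, …, u_k, ū, u_{k+1}, …, u_{l+1}) be the refined knot vector (of length l + 2) with B-spline basis functions B†_{i,p}, and define new control points P†_i = α_i·P_i + (1 − α_i)·P_{i−1} for i = 1, …, l − p + 1, where α_i = 1 for 1 ≤ i ≤ k − p, α_i = (ū − u_i)/(u_{i+p} − u_i) for k − p + 1 ≤ i ≤ k, and α_i = 0 for k + 1 ≤ i ≤ l − p + 1 (the undefined terms P₀ and P_{l−p+1} never occur since α₁ = 1 and α_{l−p+1} = 0). Then Σ_{i=1}^{l−p} B_{i,p}(u)·P_i = Σ_{i=1}^{l−p+1} B†_{i,p}(u)·P†_i for every u ∈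 [u_{p+1}, u_{l−p+1}). -/
open MeasureTheory Set Filter Topology Classical

set_option maxHeartbeats 2000000

private lemma bspline_eq_zero (V : ℕ → ℝ) :
    ∀ (q i : ℕ) (t : ℝ), (∀ j, i ≤ j → j + 1 ≤ i + q + 1 → V j ≤ V (j+1)) →
      (t < V i ∨ V (i + q + 1) ≤ t) → bspline V q i t = 0
  | 0, i, t, hmono, hout => by
      simp only [bspline]
      rw [if_neg]
      rintro ⟨h1, h2⟩
      rcases hout with h | h
      · linarith
      · exact absurd h2 (not_lt.2 h)
  | q+1, i, t, hmono, hout => by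
      simp only [bspline]
      rw [bspline_eq_zero V q i t (fun j hj hj' => hmono j hj (by omega)) ?_,
          bspline_eq_zero V q (i+1) t (fun j hj hj' => hmono j (by omega) (by omega)) ?_]
      · simp
      · rcases hout with h | h
        · exact Or.inl (lt_of_lt_of_le h (hmono i le_rfl (by omega)))
        · right; rw [show i+1+q+1 = i+(q+1)+1 by omega]; exact h
      · rcases hout with h | h
        · exact Or.inl h
        · exact Or.inr (le_trans (hmono (i+q+1) (by omega) (by omega)) h)

private lemma monoU (l : ℕ) (U : ℕ → ℝ) (hU : ∀ j, 1 ≤ j → j ≤ l → U j ≤ U (j + 1)) :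
    ∀ a b, 1 ≤ a → a ≤ b → b ≤ l + 1 → U a ≤ U b := by
  intro a b ha hab hbl
  induction b with
  | zero => omega
  | succ n ih =>
    rcases Nat.lt_or_ge a (n+1) with h | h
    · exact le_trans (ih (by omega) (by omega)) (hU n (by omega) (by omega))
    · have : a = n + 1 := by omega
      rw [this]

private lemma bspline_key (l k : ℕ) (U U' : ℕ → ℝ) (ubar : ℝ)
    (hU : ∀ j, 1 ≤ j → j ≤ l → U j ≤ U (j + 1))
    (hk0 : 1 ≤ k) (hkl : k + 1 ≤ l)
    (hu1 : U k ≤ ubar) (hu2 : ubar < U (k + 1))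
    (hU' : ∀ j, U' j = if j ≤ k then U j else if j = k + 1 then ubar else U (j - 1)) :
    ∀ q i t, 1 ≤ i → i + q ≤ l →
      bspline U q i t =
        (if i + q ≤ k then 1 else if i ≤ k then (ubar - U i) / (U (i + q) - U i) else 0) *
            bspline U' q i t +
          (1 - if i + 1 + q ≤ k then 1
            else if i + 1 ≤ k then (ubar - U (i + 1)) / (U (i + 1 + q) - U (i + 1)) else 0) *
            bspline U' q (i + 1) t := by
  have mono : ∀ a b, 1 ≤ a → a ≤ b → b ≤ l + 1 → U a ≤ U b := monoU l U hU
  have strict : ∀ a b, 1 ≤ a → a ≤ k → k + 1 ≤ b → b ≤ l + 1 → U a < U b := by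
    intro a b h1 h2 h3 h4
    calc U a ≤ U k := mono a k h1 h2 (by omega)
    _ ≤ ubar := hu1
    _ < U (k+1) := hu2
    _ ≤ U b := mono (k+1) b (by omega) h3 h4
  have eqlo : ∀ j, j ≤ k → U' j = U j := fun j hj => by rw [hU' j, if_pos hj]
  have eqmid : ∀ j, j = k + 1 → U' j = ubar := fun j hj => by
    rw [hU' j, if_neg (by omega), if_pos hj]
  have eqhi : ∀ j m, k + 2 ≤ j → m + 1 = j → U' j = U m := fun j m h1 h2 => by
    rw [hU' j, if_neg (by omega), if_neg (by omega)]; congr 1; omega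
  have monoU' : ∀ a, 1 ≤ a → a + 1 ≤ l + 2 → U' a ≤ U' (a + 1) := by
    intro a h1 h2
    rcases (by omega : a + 1 ≤ k ∨ a = k ∨ a = k + 1 ∨ k + 2 ≤ a) with h | h | h | h
    · rw [eqlo a (by omega), eqlo (a+1) h]; exact hU a h1 (by omega)
    · rw [eqlo a (by omega), eqmid (a+1) (by omega)]; rw [h]; exact hu1
    · rw [eqmid a h, eqhi (a+1) a (by omega) rfl]
      calc ubar ≤ U (k+1) := le_of_lt hu2
      _ ≤ U a := by rw [h]
    · rw [eqhi a (a-1) h (by omega), eqhi (a+1) a (by omega) rfl]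
      exact mono (a-1) a (by omega) (by omega) (by omega)
  have kill : ∀ (q i : ℕ) (t : ℝ), i + q + 1 ≤ l + 2 → 1 ≤ i → U' (i + q + 1) = U' i →
      bspline U' q i t = 0 := by
    intro q i t h2 h1 he
    refine bspline_eq_zero U' q i t (fun j hj hj' => monoU' j (by omega) (by omega)) ?_
    rcases le_or_gt (U' i) t with h | h
    · exact Or.inr (he ▸ h)
    · exact Or.inl h
  intro q
  induction q with
  | zero =>
    intro i t hi hil
    simp only [bspline, Nat.add_zero]
    rcases (by omega : i + 1 ≤ k ∨ i = k ∨ k + 1 ≤ i) with h | h | h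
    · rw [if_pos (show i ≤ k by omega), if_pos (show i + 1 ≤ k by omega),
        eqlo i (by omega), eqlo (i+1) (by omega)]
      ring
    · rw [if_pos (show i ≤ k by omega), if_neg (show ¬ i + 1 ≤ k by omega),
        if_neg (show ¬ i + 1 ≤ k by omega), eqlo i (by omega), eqmid (i+1) (by omega),
        eqhi (i+1+1) (i+1) (by omega) rfl]
      have h1 : U i ≤ ubar := by rw [h]; exact hu1
      have h2 : ubar < U (i + 1) := by rw [h]; exact hu2
      rcases lt_or_ge t ubar with ht | ht
      · rw [if_neg (show ¬ (ubar ≤ t ∧ t < U (i+1)) from fun hc => absurd hc.1 (not_le.2 ht))]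
        by_cases hA : U i ≤ t
        · rw [if_pos (show U i ≤ t ∧ t < U (i+1) from ⟨hA, by linarith⟩),
            if_pos (show U i ≤ t ∧ t < ubar from ⟨hA, ht⟩)]
          ring
        · rw [if_neg (show ¬ (U i ≤ t ∧ t < U (i+1)) from fun hc => hA hc.1),
            if_neg (show ¬ (U i ≤ t ∧ t < ubar) from fun hc => hA hc.1)]
          ring
      · rw [if_neg (show ¬ (U i ≤ t ∧ t < ubar) from fun hc => absurd hc.2 (not_lt.2 ht))]
        by_cases hA : t < U (i+1)
        · rw [if_pos (show U i ≤ t ∧ t < U (i+1) from ⟨by linarith, hA⟩),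
            if_pos (show ubar ≤ t ∧ t < U (i+1) from ⟨ht, hA⟩)]
          ring
        · rw [if_neg (show ¬ (U i ≤ t ∧ t < U (i+1)) from fun hc => hA hc.2),
            if_neg (show ¬ (ubar ≤ t ∧ t < U (i+1)) from fun hc => hA hc.2)]
          ring
    · rw [if_neg (show ¬ i ≤ k by omega), if_neg (show ¬ i ≤ k by omega),
        if_neg (show ¬ i + 1 ≤ k by omega), if_neg (show ¬ i + 1 ≤ k by omega),
        eqhi (i+1) i (by omega) rfl, eqhi (i+1+1) (i+1) (by omega) rfl]
      ring
  | succ q IH =>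
    intro i t hi hil
    have hx := IH i t hi (by omega)
    have hy := IH (i+1) t (by omega) (by omega)
    simp only [bspline]
    simp only [show i+1+(q+1) = i+q+2 from by omega, show i+(q+1) = i+q+1 from by omega,
      show i+1+q+1 = i+q+2 from by omega, show i+1+q+2 = i+q+3 from by omega,
      show i+1+1+q = i+q+2 from by omega, show i+1+1 = i+2 from by omega,
      show i+1+q = i+q+1 from by omega] at hx hy ⊢
    rcases (by omega : i+q+2 ≤ k ∨ k = i+q+1 ∨ k = i+q ∨ (i ≤ k ∧ k+1 ≤ i+q) ∨ k+1 ≤ i)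
      with hc | hc | hc | ⟨hc1, hc2⟩ | hc
    · -- A : everything left of new knot
      rw [if_pos (show i+q ≤ k by omega), if_pos (show i+q+1 ≤ k by omega)] at hx
      rw [if_pos (show i+q+1 ≤ k by omega), if_pos (show i+q+2 ≤ k by omega)] at hy
      norm_num at hx hy
      rw [hx, hy, if_pos (show i+q+1 ≤ k by omega), if_pos (show i+q+2 ≤ k by omega),
        eqlo i (by omega), eqlo (i+1) (by omega), eqlo (i+q+1) (by omega),
        eqlo (i+q+2) (by omega)]
      ring
    · -- B : k = i+q+1
      rw [if_pos (show i+q ≤ k by omega), if_pos (show i+q+1 ≤ k by omega)] at hx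
      norm_num at hx
      rw [if_pos (show i+q+1 ≤ k by omega), if_neg (show ¬ i+q+2 ≤ k by omega)] at hy
      rw [hx, if_pos (show i+q+1 ≤ k by omega), if_neg (show ¬ i+q+2 ≤ k by omega),
          if_pos (show i+1 ≤ k by omega),
          if_neg (show ¬ U (i+q+2) = U (i+1) from
            (strict (i+1) (i+q+2) (by omega) (by omega) (by omega) (by omega)).ne'),
          eqlo i (by omega), eqlo (i+1) (by omega), eqlo (i+q+1) (by omega),
          eqmid (i+q+2) (by omega), eqhi (i+q+3) (i+q+2) (by omega) rfl]
      generalize (if U (i+q+1) = U i then (0:ℝ)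
        else (t - U i) / (U (i+q+1) - U i) * bspline U' q i t) = T
      have hub : ubar < U (i+q+2) := by rw [show i+q+2 = k+1 by omega]; exact hu2
      have d2 : U (i+q+2) - U (i+1) ≠ 0 := sub_ne_zero.2
        (strict (i+1) (i+q+2) (by omega) (by omega) (by omega) (by omega)).ne'
      have d6 : U (i+q+2) - ubar ≠ 0 := sub_ne_zero.2 hub.ne'
      rcases (by omega : i+2 ≤ k ∨ k = i+1) with hq | hq
      · rw [if_pos (show i+2 ≤ k by omega)] at hy
        rw [eqlo (i+2) (by omega), hy]
        by_cases hd2 : ubar = U (i+1)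
        · have hy0 : bspline U' q (i+1) t = 0 := by
            refine kill q (i+1) t (by omega) (by omega) ?_
            rw [show i+1+q+1 = i+q+2 by omega, eqmid (i+q+2) (by omega),
              eqlo (i+1) (by omega)]
            exact hd2
          have e2 : U (i+2) = ubar :=
            le_antisymm (le_trans (mono (i+2) k (by omega) (by omega) (by omega)) hu1)
              (hd2 ▸ mono (i+1) (i+2) (by omega) (by omega) (by omega))
          rw [if_pos hd2, if_pos hd2, hy0]
          by_cases hd3 : U (i+q+2) = U (i+2)
          · exfalso; rw [e2] at hd3; exact hub.ne' hd3
          · rw [if_neg hd3, ← hd2, e2]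
            field_simp <;> ring
        · rw [if_neg hd2, if_neg hd2]
          have d4 : ubar - U (i+1) ≠ 0 := sub_ne_zero.2 hd2
          by_cases hd3 : U (i+q+2) = U (i+2)
          · have hz0 : bspline U' q (i+2) t = 0 := by
              refine kill q (i+2) t (by omega) (by omega) ?_
              rw [show i+2+q+1 = i+q+3 by omega, eqhi (i+q+3) (i+q+2) (by omega) rfl,
                eqlo (i+2) (by omega)]
              exact hd3
            rw [if_pos hd3, hz0, hd3]
            have d7 : U (i+2) - U (i+1) ≠ 0 := by rw [← hd3]; exact d2
            field_simp <;> ring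
          · have d5 : U (i+q+2) - U (i+2) ≠ 0 := sub_ne_zero.2 hd3
            rw [if_neg hd3]
            field_simp <;> ring
      · rw [if_neg (show ¬ i+2 ≤ k by omega)] at hy
        rw [eqmid (i+2) (by omega), hy,
            if_neg (show ¬ U (i+q+2) = ubar from fun hh => hub.ne' hh)]
        by_cases hd2 : ubar = U (i+1)
        · have hy0 : bspline U' q (i+1) t = 0 := by
            refine kill q (i+1) t (by omega) (by omega) ?_
            rw [show i+1+q+1 = i+q+2 by omega, eqmid (i+q+2) (by omega),
              eqlo (i+1) (by omega)]
            exact hd2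
          rw [if_pos hd2, if_pos hd2, hy0, ← hd2]
          field_simp <;> ring
        · rw [if_neg hd2, if_neg hd2]
          have d4 : ubar - U (i+1) ≠ 0 := sub_ne_zero.2 hd2
          field_simp <;> ring
    · -- C : k = i+q
      rw [if_pos (show i+q ≤ k by omega), if_neg (show ¬ i+q+1 ≤ k by omega)] at hx
      rw [if_neg (show ¬ i+q+1 ≤ k by omega), if_neg (show ¬ i+q+2 ≤ k by omega)] at hy
      rw [if_neg (show ¬ i+q+1 ≤ k by omega), if_pos (show i ≤ k by omega),
          if_neg (show ¬ i+q+2 ≤ k by omega),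
          if_neg (show ¬ U (i+q+1) = U i from
            (strict i (i+q+1) (by omega) (by omega) (by omega) (by omega)).ne'),
          eqlo i (by omega), eqmid (i+q+1) (by omega),
          eqhi (i+q+2) (i+q+1) (by omega) rfl, eqhi (i+q+3) (i+q+2) (by omega) rfl]
      have dA : U (i+q+1) - U i ≠ 0 := sub_ne_zero.2
        (strict i (i+q+1) (by omega) (by omega) (by omega) (by omega)).ne'
      have hub1 : ubar < U (i+q+1) := by rw [show i+q+1 = k+1 by omega]; exact hu2
      have hub2 : ubar < U (i+q+2) :=
        hub1.trans_le (mono (i+q+1) (i+q+2) (by omega) (by omega) (by omega))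
      have dF : U (i+q+1) - ubar ≠ 0 := sub_ne_zero.2 hub1.ne'
      have dG : U (i+q+2) - ubar ≠ 0 := sub_ne_zero.2 hub2.ne'
      rcases (by omega : i+2 ≤ k ∨ k = i+1 ∨ k = i) with hq | hq | hq
      · -- q ≥ 2
        rw [if_pos (show i+1 ≤ k by omega)] at hx
        rw [if_pos (show i+1 ≤ k by omega), if_pos (show i+2 ≤ k by omega)] at hy
        rw [if_pos (show i+1 ≤ k by omega), eqlo (i+1) (by omega), eqlo (i+2) (by omega),
            if_neg (show ¬ U (i+q+1) = U (i+1) from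
              (strict (i+1) (i+q+1) (by omega) (by omega) (by omega) (by omega)).ne'),
            if_neg (show ¬ U (i+q+1) = U (i+1) from
              (strict (i+1) (i+q+1) (by omega) (by omega) (by omega) (by omega)).ne'),
            if_neg (show ¬ U (i+q+2) = U (i+2) from
              (strict (i+2) (i+q+2) (by omega) (by omega) (by omega) (by omega)).ne'),
            if_neg (show ¬ U (i+q+2) = U (i+1) from
              (strict (i+1) (i+q+2) (by omega) (by omega) (by omega) (by omega)).ne'),
            hx, hy]
        have dB : U (i+q+1) - U (i+1) ≠ 0 := sub_ne_zero.2
          (strict (i+1) (i+q+1) (by omega) (by omega) (by omega) (by omega)).ne'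
        have dC : U (i+q+2) - U (i+1) ≠ 0 := sub_ne_zero.2
          (strict (i+1) (i+q+2) (by omega) (by omega) (by omega) (by omega)).ne'
        have dD : U (i+q+2) - U (i+2) ≠ 0 := sub_ne_zero.2
          (strict (i+2) (i+q+2) (by omega) (by omega) (by omega) (by omega)).ne'
        by_cases hdx : ubar = U i
        · have hx0 : bspline U' q i t = 0 := kill q i t (by omega) hi
            (by rw [eqmid (i+q+1) (by omega), eqlo i (by omega)]; exact hdx)
          have e1 : U (i+1) = ubar :=
            le_antisymm (le_trans (mono (i+1) k (by omega) (by omega) (by omega)) hu1)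
              (hdx ▸ mono i (i+1) (by omega) (by omega) (by omega))
          have e2 : U (i+2) = ubar :=
            le_antisymm (le_trans (mono (i+2) k (by omega) (by omega) (by omega)) hu1)
              (hdx ▸ mono i (i+2) (by omega) (by omega) (by omega))
          rw [if_pos hdx, hx0, ← hdx, e1, e2]
          field_simp <;> ring
        · rw [if_neg hdx]
          have dE : ubar - U i ≠ 0 := sub_ne_zero.2 hdx
          field_simp <;> ring
      · -- q = 1
        rw [if_pos (show i+1 ≤ k by omega)] at hx
        rw [if_pos (show i+1 ≤ k by omega), if_neg (show ¬ i+2 ≤ k by omega)] at hy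
        rw [if_pos (show i+1 ≤ k by omega), eqlo (i+1) (by omega), eqmid (i+2) (by omega),
            if_neg (show ¬ U (i+q+1) = U (i+1) from
              (strict (i+1) (i+q+1) (by omega) (by omega) (by omega) (by omega)).ne'),
            if_neg (show ¬ U (i+q+1) = U (i+1) from
              (strict (i+1) (i+q+1) (by omega) (by omega) (by omega) (by omega)).ne'),
            if_neg (show ¬ U (i+q+2) = ubar from hub2.ne'),
            if_neg (show ¬ U (i+q+2) = U (i+1) from
              (strict (i+1) (i+q+2) (by omega) (by omega) (by omega) (by omega)).ne'),
            hx, hy]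
        have dB : U (i+q+1) - U (i+1) ≠ 0 := sub_ne_zero.2
          (strict (i+1) (i+q+1) (by omega) (by omega) (by omega) (by omega)).ne'
        have dC : U (i+q+2) - U (i+1) ≠ 0 := sub_ne_zero.2
          (strict (i+1) (i+q+2) (by omega) (by omega) (by omega) (by omega)).ne'
        by_cases hdx : ubar = U i
        · have hx0 : bspline U' q i t = 0 := kill q i t (by omega) hi
            (by rw [eqmid (i+q+1) (by omega), eqlo i (by omega)]; exact hdx)
          have e1 : U (i+1) = ubar :=
            le_antisymm (le_trans (mono (i+1) k (by omega) (by omega) (by omega)) hu1)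
              (hdx ▸ mono i (i+1) (by omega) (by omega) (by omega))
          rw [if_pos hdx, hx0, ← hdx, e1]
          field_simp <;> ring
        · rw [if_neg hdx]
          have dE : ubar - U i ≠ 0 := sub_ne_zero.2 hdx
          field_simp <;> ring
      · -- q = 0
        rw [if_neg (show ¬ i+1 ≤ k by omega)] at hx
        rw [if_neg (show ¬ i+1 ≤ k by omega), if_neg (show ¬ i+2 ≤ k by omega)] at hy
        norm_num at hx hy
        rw [if_neg (show ¬ i+1 ≤ k by omega), eqmid (i+1) (by omega),
            eqhi (i+2) (i+1) (by omega) rfl,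
            if_neg (show ¬ U (i+q+1) = ubar from hub1.ne'),
            if_neg (show ¬ U (i+q+1) = ubar from hub1.ne'),
            hx, hy]
        by_cases hdz : U (i+q+2) = U (i+1)
        · rw [if_pos hdz]
          by_cases hdx : ubar = U i
          · have hx0 : bspline U' q i t = 0 := kill q i t (by omega) hi
              (by rw [eqmid (i+q+1) (by omega), eqlo i (by omega)]; exact hdx)
            rw [if_pos hdx, hx0, ← hdx]
            field_simp <;> ring
          · rw [if_neg hdx]
            have dE : ubar - U i ≠ 0 := sub_ne_zero.2 hdx
            field_simp <;> ring
        · rw [if_neg hdz]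
          have dz : U (i+q+2) - U (i+1) ≠ 0 := sub_ne_zero.2 hdz
          by_cases hdx : ubar = U i
          · have hx0 : bspline U' q i t = 0 := kill q i t (by omega) hi
              (by rw [eqmid (i+q+1) (by omega), eqlo i (by omega)]; exact hdx)
            rw [if_pos hdx, hx0, ← hdx]
            field_simp <;> ring
          · rw [if_neg hdx]
            have dE : ubar - U i ≠ 0 := sub_ne_zero.2 hdx
            field_simp <;> ring
    · -- D : i ≤ k ≤ i+q-1
      rw [if_neg (show ¬ i+q ≤ k by omega), if_pos (show i ≤ k by omega),
          if_neg (show ¬ i+q+1 ≤ k by omega)] at hx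
      rw [if_neg (show ¬ i+q+1 ≤ k by omega), if_neg (show ¬ i+q+2 ≤ k by omega)] at hy
      rw [if_neg (show ¬ i+q+1 ≤ k by omega), if_pos (show i ≤ k by omega),
          if_neg (show ¬ i+q+2 ≤ k by omega),
          if_neg (show ¬ U (i+q+1) = U i from
            (strict i (i+q+1) (by omega) (by omega) (by omega) (by omega)).ne'),
          eqlo i (by omega), eqhi (i+q+1) (i+q) (by omega) rfl,
          eqhi (i+q+2) (i+q+1) (by omega) rfl, eqhi (i+q+3) (i+q+2) (by omega) rfl,
          if_neg (show ¬ U (i+q) = U i from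
            (strict i (i+q) (by omega) (by omega) (by omega) (by omega)).ne')]
      have dA : U (i+q+1) - U i ≠ 0 := sub_ne_zero.2
        (strict i (i+q+1) (by omega) (by omega) (by omega) (by omega)).ne'
      have dA' : U (i+q) - U i ≠ 0 := sub_ne_zero.2
        (strict i (i+q) (by omega) (by omega) (by omega) (by omega)).ne'
      have hub1 : ubar < U (i+q+1) :=
        hu2.trans_le (mono (k+1) (i+q+1) (by omega) (by omega) (by omega))
      have hub2 : ubar < U (i+q+2) :=
        hu2.trans_le (mono (k+1) (i+q+2) (by omega) (by omega) (by omega))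
      have dF : U (i+q+1) - ubar ≠ 0 := sub_ne_zero.2 hub1.ne'
      have dG : U (i+q+2) - ubar ≠ 0 := sub_ne_zero.2 hub2.ne'
      rcases (by omega : i+2 ≤ k ∨ k = i+1 ∨ k = i) with hq | hq | hq
      · -- k ≥ i+2
        rw [if_pos (show i+1 ≤ k by omega)] at hx
        rw [if_pos (show i+1 ≤ k by omega), if_pos (show i+2 ≤ k by omega)] at hy
        rw [if_pos (show i+1 ≤ k by omega), eqlo (i+1) (by omega), eqlo (i+2) (by omega),
            if_neg (show ¬ U (i+q+2) = U (i+1) from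
              (strict (i+1) (i+q+2) (by omega) (by omega) (by omega) (by omega)).ne'),
            if_neg (show ¬ U (i+q+1) = U (i+1) from
              (strict (i+1) (i+q+1) (by omega) (by omega) (by omega) (by omega)).ne'),
            if_neg (show ¬ U (i+q+1) = U (i+1) from
              (strict (i+1) (i+q+1) (by omega) (by omega) (by omega) (by omega)).ne'),
            if_neg (show ¬ U (i+q+2) = U (i+2) from
              (strict (i+2) (i+q+2) (by omega) (by omega) (by omega) (by omega)).ne'),
            hx, hy]
        have dB : U (i+q+1) - U (i+1) ≠ 0 := sub_ne_zero.2
          (strict (i+1) (i+q+1) (by omega) (by omega) (by omega) (by omega)).ne'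
        have dC : U (i+q+2) - U (i+1) ≠ 0 := sub_ne_zero.2
          (strict (i+1) (i+q+2) (by omega) (by omega) (by omega) (by omega)).ne'
        have dD : U (i+q+2) - U (i+2) ≠ 0 := sub_ne_zero.2
          (strict (i+2) (i+q+2) (by omega) (by omega) (by omega) (by omega)).ne'
        field_simp <;> ring
      · -- k = i+1
        rw [if_pos (show i+1 ≤ k by omega)] at hx
        rw [if_pos (show i+1 ≤ k by omega), if_neg (show ¬ i+2 ≤ k by omega)] at hy
        rw [if_pos (show i+1 ≤ k by omega), eqlo (i+1) (by omega), eqmid (i+2) (by omega),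
            if_neg (show ¬ U (i+q+2) = U (i+1) from
              (strict (i+1) (i+q+2) (by omega) (by omega) (by omega) (by omega)).ne'),
            if_neg (show ¬ U (i+q+1) = U (i+1) from
              (strict (i+1) (i+q+1) (by omega) (by omega) (by omega) (by omega)).ne'),
            if_neg (show ¬ U (i+q+1) = U (i+1) from
              (strict (i+1) (i+q+1) (by omega) (by omega) (by omega) (by omega)).ne'),
            if_neg (show ¬ U (i+q+2) = ubar from hub2.ne'),
            hx, hy]
        have dB : U (i+q+1) - U (i+1) ≠ 0 := sub_ne_zero.2
          (strict (i+1) (i+q+1) (by omega) (by omega) (by omega) (by omega)).ne'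
        have dC : U (i+q+2) - U (i+1) ≠ 0 := sub_ne_zero.2
          (strict (i+1) (i+q+2) (by omega) (by omega) (by omega) (by omega)).ne'
        field_simp <;> ring
      · -- k = i
        rw [if_neg (show ¬ i+1 ≤ k by omega)] at hx
        rw [if_neg (show ¬ i+1 ≤ k by omega), if_neg (show ¬ i+2 ≤ k by omega)] at hy
        norm_num at hx hy
        rw [if_neg (show ¬ i+1 ≤ k by omega), eqmid (i+1) (by omega),
            eqhi (i+2) (i+1) (by omega) rfl,
            if_neg (show ¬ U (i+q+1) = ubar from hub1.ne'),
            if_neg (show ¬ U (i+q+1) = ubar from hub1.ne'),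
            hx, hy]
        by_cases hdz : U (i+q+2) = U (i+1)
        · rw [if_pos hdz]
          field_simp <;> ring
        · rw [if_neg hdz]
          have dz : U (i+q+2) - U (i+1) ≠ 0 := sub_ne_zero.2 hdz
          field_simp <;> ring
    · -- E : everything right of new knot
      rw [if_neg (show ¬ i+q ≤ k by omega), if_neg (show ¬ i ≤ k by omega),
          if_neg (show ¬ i+q+1 ≤ k by omega), if_neg (show ¬ i+1 ≤ k by omega)] at hx
      rw [if_neg (show ¬ i+q+1 ≤ k by omega), if_neg (show ¬ i+1 ≤ k by omega),
          if_neg (show ¬ i+q+2 ≤ k by omega), if_neg (show ¬ i+2 ≤ k by omega)] at hy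
      norm_num at hx hy
      rw [hx, hy, if_neg (show ¬ i+q+1 ≤ k by omega), if_neg (show ¬ i ≤ k by omega),
          if_neg (show ¬ i+q+2 ≤ k by omega), if_neg (show ¬ i+1 ≤ k by omega),
          eqhi (i+1) i (by omega) rfl, eqhi (i+2) (i+1) (by omega) rfl,
          eqhi (i+q+2) (i+q+1) (by omega) rfl, eqhi (i+q+3) (i+q+2) (by omega) rfl]
      ring


theorem bspline_knot_insertion (p l k d : ℕ) (U : ℕ → ℝ) (P : ℕ → Fin d → ℝ)
    (hp : 1 ≤ p)
    (hU : ∀ j, 1 ≤ j → j ≤ l → U j ≤ U (j + 1))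
    (hk1 : p + 1 ≤ k) (hk2 : k ≤ l - p)
    (ubar : ℝ) (hubar : ubar ∈ Set.Ico (U k) (U (k + 1)))
    (U' : ℕ → ℝ)
    (hU' : U' = fun j => if j ≤ k then U j else if j = k + 1 then ubar else U (j - 1))
    (α : ℕ → ℝ)
    (hα : α = fun i => if i ≤ k - p then 1
      else if i ≤ k then (ubar - U i) / (U (i + p) - U i) else 0)
    (P' : ℕ → Fin d → ℝ)
    (hP' : P' = fun i => α i • P i + (1 - α i) • P (i - 1)) :
    ∀ t ∈ Set.Ico (U (p + 1)) (U (l - p + 1)),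
      ∑ i ∈ Finset.Icc 1 (l - p), bspline U p i t • P i =
        ∑ i ∈ Finset.Icc 1 (l - p + 1), bspline U' p i t • P' i := by
  intro t ht
  have hk0 : (1:ℕ) ≤ k := by omega
  have hkl : k + 1 ≤ l := by omega
  have hU'' : ∀ j, U' j = if j ≤ k then U j else if j = k + 1 then ubar else U (j - 1) :=
    fun j => by rw [hU']
  have key := bspline_key l k U U' ubar hU hk0 hkl hubar.1 hubar.2 hU''
  have hαeq : ∀ i, α i =
      (if i + p ≤ k then (1:ℝ) else if i ≤ k then (ubar - U i) / (U (i + p) - U i) else 0) := by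
    intro i
    rw [hα]
    dsimp only
    by_cases h1 : i ≤ k - p
    · rw [if_pos h1, if_pos (show i + p ≤ k by omega)]
    · rw [if_neg h1, if_neg (show ¬ i + p ≤ k by omega)]
  have hα1 : α 1 = 1 := by
    rw [hα]; dsimp only; rw [if_pos (show 1 ≤ k - p by omega)]
  have hαtop : α (l - p + 1) = 0 := by
    rw [hα]; dsimp only; rw [if_neg (by omega), if_neg (by omega)]
  have hb : ∀ i ∈ Finset.Icc 1 (l - p), bspline U p i t • P i =
      (α i * bspline U' p i t) • P i + ((1 - α (i + 1)) * bspline U' p (i + 1) t) • P i := by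
    intro i hi
    rw [Finset.mem_Icc] at hi
    rw [key p i t (by omega) (by omega), hαeq i, hαeq (i + 1), add_smul]
  have hr : ∑ j ∈ Finset.Icc 1 (l - p + 1), bspline U' p j t • P' j =
      (∑ j ∈ Finset.Icc 1 (l - p), (α j * bspline U' p j t) • P j)
        + ∑ j ∈ Finset.Icc 2 (l - p + 1), ((1 - α j) * bspline U' p j t) • P (j - 1) := by
    have expand : ∀ j, bspline U' p j t • P' j =
        (α j * bspline U' p j t) • P j + ((1 - α j) * bspline U' p j t) • P (j - 1) := by
      intro j
      rw [hP']
      dsimp only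
      rw [smul_add, smul_smul, smul_smul, mul_comm (bspline U' p j t) (α j),
          mul_comm (bspline U' p j t) (1 - α j)]
    rw [Finset.sum_congr rfl (fun j _ => expand j), Finset.sum_add_distrib]
    congr 1
    · rw [Finset.sum_Icc_succ_top (show 1 ≤ l - p + 1 by omega), hαtop]
      norm_num
    · rw [Finset.Icc_eq_cons_Ioc (show 1 ≤ l - p + 1 by omega), Finset.sum_cons, hα1,
        ← Finset.Icc_add_one_left_eq_Ioc]
      norm_num
  calc ∑ i ∈ Finset.Icc 1 (l - p), bspline U p i t • P i
      = ∑ i ∈ Finset.Icc 1 (l - p),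
          ((α i * bspline U' p i t) • P i + ((1 - α (i + 1)) * bspline U' p (i + 1) t) • P i) :=
        Finset.sum_congr rfl hb
    _ = (∑ i ∈ Finset.Icc 1 (l - p), (α i * bspline U' p i t) • P i)
          + ∑ i ∈ Finset.Icc 1 (l - p), ((1 - α (i + 1)) * bspline U' p (i + 1) t) • P i :=
        Finset.sum_add_distrib
    _ = (∑ i ∈ Finset.Icc 1 (l - p), (α i * bspline U' p i t) • P i)
          + ∑ j ∈ Finset.Icc 2 (l - p + 1), ((1 - α j) * bspline U' p j t) • P (j - 1) := by
        congr 1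
        rw [show (2:ℕ) = 1 + 1 from rfl, show l - p + 1 = (l - p) + 1 from rfl,
          ← Finset.map_add_right_Icc, Finset.sum_map]
        refine Finset.sum_congr rfl fun i hi => ?_
        simp
    _ = ∑ j ∈ Finset.Icc 1 (l - p + 1), bspline U' p j t • P' j := hr.symm
end
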